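/- arXiv:0802.0566 — 4 statements merged into one kernel-verified Lean document; each statement's English description precedes it below -/
import Mathlib

section
/- Let n ≥ 1 be an integer and p ∈ (0,1] with np ≥ 1, and let Z follow the binomial distribution B(n,p). Define e(Z) := E[Z]·E[Z⁻¹ | Z > 0]. Then 1 − e^{−np} ≤ e(Z) ≤ min(3.2, 1 + 5.1·(np)^{−1/4}). -/
open MeasureTheory ProbabilityTheory Finset

-- binomial sum = 1
lemma bin_sum (p : ℝ) (m : ℕ) :
    ∑ k ∈ range (m+1), (m.choose k : ℝ) * p^k * (1-p)^(m-k) = 1 := by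
  have h := add_pow p (1-p) m
  have : p + (1-p) = 1 := by ring
  rw [this, one_pow] at h
  calc ∑ k ∈ range (m+1), (m.choose k : ℝ) * p^k * (1-p)^(m-k)
      = ∑ k ∈ range (m+1), p^k * (1-p)^(m-k) * (m.choose k : ℝ) :=
        Finset.sum_congr rfl fun k _ => by ring
    _ = 1 := h.symm

lemma bin_mean (p : ℝ) (n : ℕ) (hn : 1 ≤ n) :
    ∑ k ∈ range (n+1), (k : ℝ) * ((n.choose k : ℝ) * p^k * (1-p)^(n-k)) = n * p := by
  rw [Finset.sum_range_succ']
  simp only [Nat.cast_zero, zero_mul, add_zero]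
  have key : ∀ j ∈ range n, ((j+1 : ℕ) : ℝ) * ((n.choose (j+1) : ℝ) * p^(j+1) * (1-p)^(n-(j+1)))
      = (n:ℝ) * p * (((n-1).choose j : ℝ) * p^j * (1-p)^((n-1)-j)) := by
    intro j hj
    have hj' : j < n := Finset.mem_range.mp hj
    have hc : (n:ℕ) * ((n-1).choose j) = n.choose (j+1) * (j+1) := by
      have := Nat.add_one_mul_choose_eq (n-1) j
      rwa [Nat.sub_add_cancel hn] at this
    have hcR : (n:ℝ) * ((n-1).choose j : ℝ) = (n.choose (j+1) : ℝ) * ((j:ℝ)+1) := by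
      exact_mod_cast congrArg (Nat.cast : ℕ → ℝ) hc
    have hsub : n - (j+1) = (n-1) - j := by omega
    rw [hsub, pow_succ]
    push_cast
    linear_combination (-(p^j * p * (1-p)^((n-1)-j))) * hcR
  rw [Finset.sum_congr rfl key, ← Finset.mul_sum]
  have : n - 1 + 1 = n := by omega
  rw [show (range n) = range ((n-1)+1) by rw [this]]
  rw [bin_sum p (n-1), mul_one]

lemma bin_T1 (n : ℕ) (p : ℝ) (hp : p ≠ 0) :
    ∑ k ∈ range (n+1), ((n.choose k : ℝ) * p^k * (1-p)^(n-k)) / ((k:ℝ)+1)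
      = (1 - (1-p)^(n+1)) / (((n:ℝ)+1)*p) := by
  have hfull := bin_sum p (n+1)
  rw [Finset.sum_range_succ'] at hfull
  simp only [Nat.succ_sub_succ, Nat.choose_zero_right, Nat.cast_one, one_mul, pow_zero, mul_one,
    Nat.sub_zero] at hfull
  have key : ∀ k ∈ range (n+1), ((n.choose k : ℝ) * p^k * (1-p)^(n-k)) / ((k:ℝ)+1)
      = (((n+1).choose (k+1) : ℝ) * p^(k+1) * (1-p)^((n+1)-(k+1))) / ((((n:ℝ))+1)*p) := by
    intro k _
    have hc : ((n:ℝ)+1) * (n.choose k : ℝ) = ((n+1).choose (k+1) : ℝ) * ((k:ℝ)+1) := by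
      exact_mod_cast congrArg (Nat.cast : ℕ → ℝ) (Nat.add_one_mul_choose_eq n k)
    have h1 : ((k:ℝ)+1) ≠ 0 := by positivity
    have h2 : ((n:ℝ)+1) ≠ 0 := by positivity
    rw [Nat.succ_sub_succ, pow_succ]
    rw [div_eq_div_iff h1 (mul_ne_zero h2 hp)]
    linear_combination (p^k * p * (1-p)^(n-k)) * hc
  rw [Finset.sum_congr rfl key, ← Finset.sum_div]
  congr 1
  simpa only [Nat.succ_sub_succ] using hfull.symm ▸ (by linarith [hfull] :
    ∑ k ∈ range (n+1), (((n+1).choose (k+1) : ℝ) * p^(k+1) * (1-p)^(n-k)) = 1 - (1-p)^(n+1))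

lemma bin_T2 (n : ℕ) (p : ℝ) (hp0 : 0 < p) (hp1 : p ≤ 1) :
    ∑ k ∈ range (n+1), ((n.choose k : ℝ) * p^k * (1-p)^(n-k)) / (((k:ℝ)+1)*((k:ℝ)+2))
      ≤ 1 / (((n:ℝ)+1)*((n:ℝ)+2)*p^2) := by
  have hq : (0:ℝ) ≤ 1 - p := by linarith
  set f : ℕ → ℝ := fun m => (((n+2).choose m : ℝ)) * p^m * (1-p)^((n+2)-m) with hf
  have hfnn : ∀ m, 0 ≤ f m := fun m =>
    mul_nonneg (mul_nonneg (Nat.cast_nonneg _) (pow_nonneg hp0.le _)) (pow_nonneg hq _)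
  have hfull := bin_sum p (n+2)
  rw [Finset.sum_range_succ', Finset.sum_range_succ'] at hfull
  have hnum : ∑ k ∈ range (n+1), f (k+2) ≤ 1 := by
    have he : ∑ k ∈ range (n+1), f (k+2)
        = ∑ k ∈ range (n+1), (((n+2).choose (k+1+1) : ℝ)) * p^(k+1+1) * (1-p)^((n+2)-(k+1+1)) :=
      Finset.sum_congr rfl fun k _ => rfl
    rw [he]
    have t0 : (0:ℝ) ≤ ((n+2).choose 0 : ℝ) * p^0 * (1-p)^(n+2-0) :=
      mul_nonneg (mul_nonneg (Nat.cast_nonneg _) (pow_nonneg hp0.le _)) (pow_nonneg hq _)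
    have t1 : (0:ℝ) ≤ ((n+2).choose (0+1) : ℝ) * p^(0+1) * (1-p)^(n+2-(0+1)) :=
      mul_nonneg (mul_nonneg (Nat.cast_nonneg _) (pow_nonneg hp0.le _)) (pow_nonneg hq _)
    linarith [hfull]
  have key : ∀ k ∈ range (n+1), ((n.choose k : ℝ) * p^k * (1-p)^(n-k)) / (((k:ℝ)+1)*((k:ℝ)+2))
      = f (k+2) / ((((n:ℝ))+1)*(((n:ℝ))+2)*p^2) := by
    intro k _
    have hc1 : ((n:ℝ)+1) * (n.choose k : ℝ) = ((n+1).choose (k+1) : ℝ) * ((k:ℝ)+1) := by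
      exact_mod_cast congrArg (Nat.cast : ℕ → ℝ) (Nat.add_one_mul_choose_eq n k)
    have hc2 : ((n:ℝ)+2) * ((n+1).choose (k+1) : ℝ) = ((n+2).choose (k+2) : ℝ) * ((k:ℝ)+2) := by
      have h := congrArg (Nat.cast : ℕ → ℝ) (Nat.add_one_mul_choose_eq (n+1) (k+1))
      push_cast at h
      linarith [h]
    have h1 : ((k:ℝ)+1) ≠ 0 := by positivity
    have h2 : ((k:ℝ)+2) ≠ 0 := by positivity
    have h3 : ((n:ℝ)+1) ≠ 0 := by positivity
    have h4 : ((n:ℝ)+2) ≠ 0 := by positivity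
    have hp : p ≠ 0 := ne_of_gt hp0
    have hfk : f (k+2) = ((n+2).choose (k+2) : ℝ) * (p^k*p*p) * (1-p)^(n-k) := by
      rw [hf]
      simp only []
      rw [show (n+2)-(k+2) = n-k by omega, show k+2 = (k+1)+1 by omega, pow_succ, pow_succ]
    rw [hfk]
    rw [div_eq_div_iff (mul_ne_zero h1 h2) (by positivity)]
    linear_combination (p^k*p*p*(1-p)^(n-k)*((n:ℝ)+2)) * hc1
      + (p^k*p*p*(1-p)^(n-k)*((k:ℝ)+1)) * hc2
  rw [Finset.sum_congr rfl key, ← Finset.sum_div]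
  have hden : (0:ℝ) < ((n:ℝ)+1)*(((n:ℝ))+2)*p^2 := by positivity
  gcongr

lemma analysis (μ : ℝ) (hμ : 1 ≤ μ) (M S P : ℝ)
    (hCS : P^2 ≤ M*S) (hMS2 : M*S ≤ 2*P) (hMS3 : M*S ≤ 1 + 3/μ)
    (hPlow : 1 - Real.exp (-μ) ≤ P) (hPpos : 0 < P) :
    1 - Real.exp (-μ) ≤ M * (S/P) ∧
      M * (S/P) ≤ min 3.2 (1 + 5.1 * μ ^ (-(1 / 4 : ℝ))) := by
  have hμ0 : (0:ℝ) < μ := by linarith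
  have hE : M * (S/P) = M*S/P := (mul_div_assoc _ _ _).symm
  have hle2 : M * (S/P) ≤ 2 := by
    rw [hE, div_le_iff₀ hPpos]
    linarith
  constructor
  · rw [hE, le_div_iff₀ hPpos]
    nlinarith
  · rw [le_min_iff]
    refine ⟨by linarith, ?_⟩
    have hrneg : μ ^ (-(1/4:ℝ)) = (μ ^ ((1/4):ℝ))⁻¹ := Real.rpow_neg hμ0.le _
    set t := μ ^ ((1/4):ℝ) with hT
    have ht1 : 1 ≤ t := Real.one_le_rpow hμ (by norm_num)
    have ht0 : (0:ℝ) < t := by linarith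
    have ht4 : t^(4:ℕ) = μ := by
      rw [hT, ← Real.rpow_natCast (μ ^ ((1/4):ℝ)) 4, ← Real.rpow_mul hμ0.le]
      norm_num
    rw [hrneg]
    by_cases hcase : 1 ≤ 5.1 * t⁻¹
    · linarith
    · push_neg at hcase
      have h5 : 5.1 < t := by
        have := (mul_inv_lt_iff₀ ht0).mp hcase
        linarith
      have hexp : Real.exp (-μ) ≤ μ⁻¹ := by
        rw [Real.exp_neg]
        have h1 : μ ≤ Real.exp μ := by linarith [Real.add_one_le_exp μ]
        exact inv_anti₀ hμ0 h1
      have hPlb : 1 - μ⁻¹ ≤ P := by linarith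
      have hfin : 1 + 3/μ ≤ (1 + 5.1 * t⁻¹) * (1 - μ⁻¹) := by
        rw [← ht4]
        have ht4pos : (0:ℝ) < t^(4:ℕ) := by positivity
        rw [div_eq_mul_inv]
        have htne : t ≠ 0 := ne_of_gt ht0
        field_simp
        have h5' : (0:ℝ) ≤ t - 5.1 := by linarith
        nlinarith [mul_nonneg h5' (pow_nonneg ht0.le 7), mul_nonneg h5' (pow_nonneg ht0.le 6),
          mul_nonneg h5' (pow_nonneg ht0.le 5), mul_nonneg h5' (pow_nonneg ht0.le 4),
          mul_nonneg h5' (pow_nonneg ht0.le 3), pow_pos ht0 4, pow_pos ht0 5,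
          mul_nonneg h5' h5', pow_pos ht0 8]
      have h51 : (0:ℝ) ≤ 1 + 5.1 * t⁻¹ := by positivity
      rw [hE, div_le_iff₀ hPpos]
      calc M*S ≤ 1 + 3/μ := hMS3
        _ ≤ (1 + 5.1 * t⁻¹) * (1 - μ⁻¹) := hfin
        _ ≤ (1 + 5.1 * t⁻¹) * P := by
            apply mul_le_mul_of_nonneg_left hPlb h51

set_option maxHeartbeats 1000000 in
/-- Bounds on `e(Z) = E[Z]·E[Z⁻¹ | Z > 0]` for a binomial random
variable `Z ~ B(n,p)` with `n ≥ 1`, `p ∈ (0,1]` and `np ≥ 1`: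
`1 − e^{−np} ≤ e(Z) ≤ min(3.2, 1 + 5.1·(np)^{−1/4})`. -/
theorem stmt_0 {Ω : Type*} [MeasureSpace Ω] [IsProbabilityMeasure (ℙ : Measure Ω)]
    (n : ℕ) (p : ℝ) (hn : 1 ≤ n) (hp0 : 0 < p) (hp1 : p ≤ 1) (hnp : 1 ≤ (n : ℝ) * p)
    (Z : Ω → ℕ) (hZmeas : Measurable Z)
    (hbin : ∀ k : ℕ,
      (ℙ {ω | Z ω = k}).toReal = (n.choose k : ℝ) * p ^ k * (1 - p) ^ (n - k)) :
    1 - Real.exp (-((n : ℝ) * p)) ≤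
        (∫ ω, (Z ω : ℝ)) *
          ((∫ ω in {ω | 0 < Z ω}, ((Z ω : ℝ))⁻¹) / (ℙ {ω | 0 < Z ω}).toReal) ∧
      (∫ ω, (Z ω : ℝ)) *
          ((∫ ω in {ω | 0 < Z ω}, ((Z ω : ℝ))⁻¹) / (ℙ {ω | 0 < Z ω}).toReal) ≤
        min 3.2 (1 + 5.1 * ((n : ℝ) * p) ^ (-(1 / 4 : ℝ))) := by
  set b : ℕ → ℝ := fun k => (n.choose k : ℝ) * p ^ k * (1 - p) ^ (n - k) with hb
  have hq0 : (0:ℝ) ≤ 1 - p := by linarith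
  have hbnn : ∀ k, 0 ≤ b k := fun k =>
    mul_nonneg (mul_nonneg (Nat.cast_nonneg _) (pow_nonneg hp0.le _)) (pow_nonneg hq0 _)
  have hA : ∀ k : ℕ, MeasurableSet {ω | Z ω = k} := fun k =>
    hZmeas (measurableSet_singleton k)
  -- the union over k ≤ n has full measure
  have hdisj : (↑(range (n+1)) : Set ℕ).PairwiseDisjoint fun k => {ω | Z ω = k} := by
    intro i _ j _ hij
    refine Set.disjoint_left.mpr fun ω h1 h2 => hij ?_
    exact h1.symm.trans h2
  have hmeasum : ℙ (⋃ k ∈ range (n+1), {ω | Z ω = k}) = 1 := by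
    rw [measure_biUnion_finset hdisj (fun k _ => hA k)]
    rw [← ENNReal.toReal_eq_one_iff]
    rw [ENNReal.toReal_sum (fun k _ => measure_ne_top _ _)]
    rw [Finset.sum_congr rfl (fun k _ => hbin k)]
    exact bin_sum p n
  have hae : ∀ᵐ ω ∂(ℙ : Measure Ω), Z ω ≤ n := by
    rw [MeasureTheory.ae_iff]
    have hsub : {ω | ¬ Z ω ≤ n} ⊆ (⋃ k ∈ range (n+1), {ω | Z ω = k})ᶜ := by
      intro ω hω
      simp only [Set.mem_setOf_eq, not_le] at hω
      simp only [Set.mem_compl_iff, Set.mem_iUnion, not_exists, Set.mem_setOf_eq]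
      rintro k hk hzk
      rw [Finset.mem_range] at hk
      omega
    refine measure_mono_null hsub ?_
    rw [prob_compl_eq_zero_iff]
    · exact hmeasum
    · exact MeasurableSet.biUnion (Set.to_countable _) (fun k _ => hA k)
  -- key : integrals of g ∘ Z
  have key : ∀ g : ℕ → ℝ, ∫ ω, g (Z ω) = ∑ k ∈ range (n+1), g k * b k := by
    intro g
    have heq : (fun ω => g (Z ω)) =ᵐ[(ℙ : Measure Ω)]
        (fun ω => ∑ k ∈ range (n+1), Set.indicator {ω' | Z ω' = k} (fun _ => g k) ω) := by
      filter_upwards [hae] with ω hω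
      have : ∀ k ∈ range (n+1), Set.indicator {ω' | Z ω' = k} (fun _ => g k) ω
          = if Z ω = k then g k else 0 := by
        intro k _
        simp only [Set.indicator_apply, Set.mem_setOf_eq]
      rw [Finset.sum_congr rfl this, Finset.sum_ite_eq (range (n+1)) (Z ω) g,
        if_pos (Finset.mem_range.mpr (by omega))]
    rw [integral_congr_ae heq,
      integral_finset_sum _ (fun k _ => (integrable_const (g k)).indicator (hA k))]
    refine Finset.sum_congr rfl fun k _ => ?_
    rw [integral_indicator_const (g k) (hA k), smul_eq_mul, mul_comm, measureReal_def, hbin k]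
  -- expectation of Z
  have hEZ : ∫ ω, (Z ω : ℝ) = (n : ℝ) * p := by
    rw [key (fun k => (k : ℝ))]
    exact bin_mean p n hn
  -- set {0 < Z}
  have hset : {ω | 0 < Z ω} = {ω | Z ω = 0}ᶜ := by
    ext ω; simp [Nat.pos_iff_ne_zero]
  have hP : (ℙ {ω | 0 < Z ω}).toReal = 1 - (1-p)^n := by
    rw [hset, prob_compl_eq_one_sub (hA 0),
      ENNReal.toReal_sub_of_le prob_le_one ENNReal.one_ne_top, ENNReal.toReal_one, hbin 0]
    simp
  have hSint : ∫ ω in {ω | 0 < Z ω}, ((Z ω : ℝ))⁻¹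
      = ∑ j ∈ range n, (((j:ℝ)+1))⁻¹ * b (j+1) := by
    rw [← integral_indicator (hset ▸ (hA 0).compl)]
    have hptw : ∀ ω, Set.indicator {ω' | 0 < Z ω'} (fun ω' => ((Z ω' : ℝ))⁻¹) ω
        = (fun k : ℕ => if 0 < k then ((k:ℝ))⁻¹ else 0) (Z ω) := by
      intro ω
      rw [Set.indicator_apply]
      rfl
    calc ∫ ω, Set.indicator {ω' | 0 < Z ω'} (fun ω' => ((Z ω' : ℝ))⁻¹) ω
        = ∫ ω, (fun k : ℕ => if 0 < k then ((k:ℝ))⁻¹ else 0) (Z ω) := by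
          exact integral_congr_ae (Filter.Eventually.of_forall hptw)
      _ = ∑ k ∈ range (n+1), (if 0 < k then ((k:ℝ))⁻¹ else 0) * b k :=
          key (fun k => if 0 < k then ((k:ℝ))⁻¹ else 0)
      _ = ∑ j ∈ range n, (((j:ℝ)+1))⁻¹ * b (j+1) := by
          rw [Finset.sum_range_succ']
          simp
  -- abbreviations
  set ν : ℝ := (n:ℝ) with hν
  have hν1 : (1:ℝ) ≤ ν := by rw [hν]; exact_mod_cast hn
  set X : ℝ := (1-p)^n with hX
  set S : ℝ := ∑ j ∈ range n, (((j:ℝ)+1))⁻¹ * b (j+1) with hS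
  have hX0 : 0 ≤ X := pow_nonneg hq0 n
  have hX1 : X < 1 := pow_lt_one₀ hq0 (by linarith) (by omega)
  have hPpos : 0 < 1 - X := by linarith
  -- sum of b over 1..n
  have hb0 : b 0 = X := by simp [hb, hX]
  have hPsum : ∑ j ∈ range n, b (j+1) = 1 - X := by
    have h1 := bin_sum p n
    rw [Finset.sum_range_succ'] at h1
    have : ∑ j ∈ range n, b (j+1) + b 0 = 1 := h1
    linarith [this, hb0.symm.le, hb0.le]
  -- mean
  have hM' : ∑ j ∈ range n, ((j:ℝ)+1) * b (j+1) = ν * p := by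
    have h1 := bin_mean p n hn
    rw [Finset.sum_range_succ'] at h1
    simp only [Nat.cast_zero, zero_mul, add_zero, Nat.cast_add, Nat.cast_one] at h1
    exact h1
  -- Cauchy-Schwarz
  have hCS : (1 - X)^2 ≤ (ν*p) * S := by
    have hcs := Finset.sum_mul_sq_le_sq_mul_sq (range n)
      (fun j => Real.sqrt (((j:ℝ)+1) * b (j+1)))
      (fun j => Real.sqrt ((((j:ℝ)+1))⁻¹ * b (j+1)))
    have h1 : ∀ j ∈ range n,
        Real.sqrt (((j:ℝ)+1)*b (j+1)) * Real.sqrt ((((j:ℝ)+1))⁻¹ * b (j+1)) = b (j+1) := by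
      intro j _
      rw [← Real.sqrt_mul (mul_nonneg (by positivity) (hbnn _))]
      have he : (((j:ℝ)+1)*b (j+1)) * ((((j:ℝ)+1))⁻¹ * b (j+1)) = (b (j+1))^2 := by
        have : ((j:ℝ)+1) ≠ 0 := by positivity
        field_simp
      rw [he, Real.sqrt_sq (hbnn _)]
    have h2 : ∀ j ∈ range n, (Real.sqrt (((j:ℝ)+1)*b (j+1)))^2 = ((j:ℝ)+1)*b (j+1) :=
      fun j _ => Real.sq_sqrt (mul_nonneg (by positivity) (hbnn _))
    have h3 : ∀ j ∈ range n, (Real.sqrt ((((j:ℝ)+1))⁻¹*b (j+1)))^2 = (((j:ℝ)+1))⁻¹*b (j+1) :=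
      fun j _ => Real.sq_sqrt (mul_nonneg (by positivity) (hbnn _))
    calc (1-X)^2 = (∑ j ∈ range n, b (j+1))^2 := by rw [hPsum]
      _ = (∑ j ∈ range n, Real.sqrt (((j:ℝ)+1)*b (j+1))
            * Real.sqrt ((((j:ℝ)+1))⁻¹ * b (j+1)))^2 := by
          rw [Finset.sum_congr rfl h1]
      _ ≤ (∑ j ∈ range n, (Real.sqrt (((j:ℝ)+1)*b (j+1)))^2)
            * (∑ j ∈ range n, (Real.sqrt ((((j:ℝ)+1))⁻¹*b (j+1)))^2) := hcs
      _ = (ν*p) * S := by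
          rw [Finset.sum_congr rfl h2, Finset.sum_congr rfl h3, hM', ← hS]
  -- the T1 identity, shifted
  have hU : ∑ j ∈ range n, b (j+1)/((j:ℝ)+2)
      = (1-(1-p)^(n+1))/((ν+1)*p) - X := by
    have hT1 := bin_T1 n p hp0.ne'
    rw [Finset.sum_range_succ'] at hT1
    have hrw : ∀ j ∈ range n, b (j+1) / (((j+1:ℕ):ℝ)+1) = b (j+1)/((j:ℝ)+2) := by
      intro j _
      congr 1
      push_cast
      ring
    rw [Finset.sum_congr rfl hrw] at hT1
    simp only [Nat.cast_zero, zero_add, div_one] at hT1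
    rw [← hν] at hT1
    have hz : (↑(n.choose 0):ℝ) * p ^ 0 * (1 - p) ^ (n - 0) = X := by simp [hX]
    rw [hz] at hT1
    linarith
  -- M*S ≤ 2*(1-X)
  have hd1 : (0:ℝ) < (ν+1)*p := by positivity
  have hn2p : (1:ℝ) ≤ ν*(ν*p) := by nlinarith
  have hYle : (ν*p)*((1-(1-p)^(n+1))/((ν+1)*p)) ≤ 1 - X + ν*p*X := by
    rw [mul_div_assoc', div_le_iff₀ hd1, pow_succ, ← hX]
    nlinarith [mul_nonneg (mul_nonneg hX0 (sub_nonneg.mpr hn2p)) hp0.le,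
      mul_nonneg hX0 hp0.le, mul_pos hp0 hp0]
  have hMS2 : (ν*p)*S ≤ 2*(1-X) := by
    have hS2 : S ≤ 2 * ∑ j ∈ range n, b (j+1)/((j:ℝ)+2) := by
      rw [Finset.mul_sum]
      refine Finset.sum_le_sum fun j _ => ?_
      have hj2 : (0:ℝ) < (j:ℝ)+2 := by positivity
      have hj1 : (0:ℝ) < (j:ℝ)+1 := by positivity
      have hfr : (((j:ℝ)+1))⁻¹ ≤ 2/((j:ℝ)+2) := by
        rw [inv_eq_one_div, div_le_div_iff₀ hj1 hj2]
        linarith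
      calc (((j:ℝ)+1))⁻¹ * b (j+1) ≤ (2/((j:ℝ)+2)) * b (j+1) :=
            mul_le_mul_of_nonneg_right hfr (hbnn _)
        _ = 2 * (b (j+1)/((j:ℝ)+2)) := by ring
    have h2 : (ν*p)*S ≤ (ν*p)*(2*((1-(1-p)^(n+1))/((ν+1)*p) - X)) := by
      apply mul_le_mul_of_nonneg_left _ (by positivity)
      rw [← hU]
      exact hS2
    have h3 : (ν*p)*(2*((1-(1-p)^(n+1))/((ν+1)*p) - X))
        = 2*((ν*p)*((1-(1-p)^(n+1))/((ν+1)*p))) - 2*(ν*p*X) := by ring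
    nlinarith [hYle, h2, h3]
  -- M*S ≤ 1 + 3/(ν p)
  have hMS3 : (ν*p)*S ≤ 1 + 3/(ν*p) := by
    have hν0 : (0:ℝ) < ν := by linarith
    have hS3a : ∑ j ∈ range n, b (j+1)/((j:ℝ)+2) ≤ 1/((ν+1)*p) := by
      rw [hU]
      have h1 : (1-(1-p)^(n+1))/((ν+1)*p) ≤ 1/((ν+1)*p) := by
        rw [div_le_div_iff₀ hd1 hd1]
        nlinarith [pow_nonneg hq0 (n+1), hd1.le]
      linarith
    have hT2s : ∑ j ∈ range n, b (j+1)/(((j:ℝ)+2)*((j:ℝ)+3)) ≤ 1/((ν+1)*(ν+2)*p^2) := by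
      have hT2 := bin_T2 n p hp0 hp1
      rw [← hν] at hT2
      have hshift := Finset.sum_range_succ'
        (fun k => ((n.choose k : ℝ) * p^k * (1-p)^(n-k)) / (((k:ℝ)+1)*((k:ℝ)+2))) n
      rw [hshift] at hT2
      have hrw2 : ∀ j ∈ range n,
          ((n.choose (j+1) : ℝ) * p^(j+1) * (1-p)^(n-(j+1))) / ((((j+1:ℕ):ℝ)+1)*(((j+1:ℕ):ℝ)+2))
          = b (j+1)/(((j:ℝ)+2)*((j:ℝ)+3)) := by
        intro j _
        congr 1
        push_cast
        ring
      rw [Finset.sum_congr rfl hrw2] at hT2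
      have h0 : (0:ℝ) ≤ ((n.choose 0 : ℝ) * p^0 * (1-p)^(n-0)) / ((((0:ℕ):ℝ)+1)*(((0:ℕ):ℝ)+2)) := by
        apply div_nonneg (hbnn 0)
        norm_num
      linarith
    have hS3 : S ≤ ∑ j ∈ range n, b (j+1)/((j:ℝ)+2)
        + 3 * ∑ j ∈ range n, b (j+1)/(((j:ℝ)+2)*((j:ℝ)+3)) := by
      rw [hS, Finset.mul_sum, ← Finset.sum_add_distrib]
      refine Finset.sum_le_sum fun j _ => ?_
      have hj0 : (0:ℝ) ≤ (j:ℝ) := Nat.cast_nonneg j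
      have hfrac : (((j:ℝ)+1))⁻¹ ≤ 1/((j:ℝ)+2) + 3*(1/(((j:ℝ)+2)*((j:ℝ)+3))) := by
        have e : 1/((j:ℝ)+2) + 3*(1/(((j:ℝ)+2)*((j:ℝ)+3))) = ((j:ℝ)+6)/(((j:ℝ)+2)*((j:ℝ)+3)) := by
          rw [mul_one_div, div_add_div _ _ (by positivity : ((j:ℝ)+2) ≠ 0)
            (by positivity : (((j:ℝ)+2)*((j:ℝ)+3)) ≠ 0)]
          rw [div_eq_div_iff (by positivity) (by positivity)]
          ring
        rw [e, inv_eq_one_div, div_le_div_iff₀ (by positivity) (by positivity)]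
        nlinarith [hj0]
      calc (((j:ℝ)+1))⁻¹ * b (j+1)
          ≤ (1/((j:ℝ)+2) + 3*(1/(((j:ℝ)+2)*((j:ℝ)+3)))) * b (j+1) :=
            mul_le_mul_of_nonneg_right hfrac (hbnn _)
        _ = b (j+1)/((j:ℝ)+2) + 3*(b (j+1)/(((j:ℝ)+2)*((j:ℝ)+3))) := by ring
    have hcomb : S ≤ 1/((ν+1)*p) + 3*(1/((ν+1)*(ν+2)*p^2)) := by
      calc S ≤ _ := hS3
        _ ≤ 1/((ν+1)*p) + 3*(1/((ν+1)*(ν+2)*p^2)) := by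
          have := hT2s
          have := hS3a
          linarith
    have hmul : (ν*p)*S ≤ (ν*p)*(1/((ν+1)*p) + 3*(1/((ν+1)*(ν+2)*p^2))) :=
      mul_le_mul_of_nonneg_left hcomb (by positivity)
    have e1 : (ν*p)*(1/((ν+1)*p)) = ν/(ν+1) := by
      rw [mul_one_div, mul_div_mul_right _ _ hp0.ne']
    have e2 : (ν*p)*(3*(1/((ν+1)*(ν+2)*p^2))) = 3*ν/((ν+1)*(ν+2)*p) := by
      rw [mul_one_div, ← mul_div_assoc]
      rw [show (ν+1)*(ν+2)*p^2 = ((ν+1)*(ν+2)*p)*p by ring,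
        show (ν*p)*3 = (3*ν)*p by ring, mul_div_mul_right _ _ hp0.ne']
    have e3 : ν/(ν+1) ≤ 1 := by
      rw [div_le_one (by positivity)]
      linarith
    have e4 : 3*ν/((ν+1)*(ν+2)*p) ≤ 3/(ν*p) := by
      rw [div_le_div_iff₀ (by positivity) (by positivity)]
      nlinarith [hp0, hν0]
    calc (ν*p)*S ≤ (ν*p)*(1/((ν+1)*p) + 3*(1/((ν+1)*(ν+2)*p^2))) := hmul
      _ = (ν*p)*(1/((ν+1)*p)) + (ν*p)*(3*(1/((ν+1)*(ν+2)*p^2))) := by ring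
      _ = ν/(ν+1) + 3*ν/((ν+1)*(ν+2)*p) := by rw [e1, e2]
      _ ≤ 1 + 3/(ν*p) := by linarith
  -- lower bound on P
  have hPlow : 1 - Real.exp (-(ν*p)) ≤ 1 - X := by
    have h1 : 1 - p ≤ Real.exp (-p) := by linarith [Real.add_one_le_exp (-p)]
    have h2 : X ≤ (Real.exp (-p))^n := by
      rw [hX]
      exact pow_le_pow_left₀ hq0 h1 n
    have h3 : (Real.exp (-p))^n = Real.exp (-(ν*p)) := by
      rw [← Real.exp_nat_mul, hν]
      congr 1
      ring
    linarith [h2, h3.le, h3.ge]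
  rw [hEZ, hSint, hP]
  exact analysis (ν*p) hnp (ν*p) S (1-X) hCS hMS2 hMS3 hPlow hPpos
end

section
/- Let a, b, c₁, c₂, c₃, c₄, κ₁, κ₂, κ₃, κ₄, c_rich > 0 and C > 1 be constants, n ∈ ℕ, and M_n an index set equipped with a map m ↦ D_m such that D_m ∈ [1,n] for every m ∈ M_n, and such that for every x ∈ [1, n − c_rich] there exists m ∈ M_n with D_m ∈ [x, x + c_rich]. Let crit₁, crit₂ : M_n → ℝ satisfy: (i) for every m ∈ M_n, crit₁(m) = (a·D_m^{−2} + b·D_m/n)(1 + ε_{1,m}) and crit₂(m) = (a·D_m^{−2} + C·b·D_m/n)(1 + ε_{2,m}), where max_{i=1,2} sup { |ε_{i,m}| : m ∈ M_n, ln(n)^{κ₁} ≤ D_m ≤ c₁·n/ln(n) } ≤ c₂·ln(n)^{−κ₂}; (ii) crit₂(m) ≥ c₃·ln(n)^{−κ₃} for every m ∈ M_n with D_m < ln(n)^{κ₁}; (iii) crit₂(m) ≥ c₄·ln(n)^{−κ₄} for every m ∈ M_n with D_m ≥ c₁·n/ln(n). Then, with K(C) := 2^{2/3}·3^{−1}·(C^{−1/3}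 − 1)² > 0, there exists n₀ > 0 depending only on a, b, (c_i)_{1≤i≤4}, (κ_i)_{1≤i≤4}, c_rich and C such that for every n ≥ n₀ and every m̂ ∈ argmin_{m∈M_n} crit₂(m), one has crit₁(m̂) ≥ (1 + K(C) − ln(n)^{−κ₂/5})·inf_{m∈M_n} crit₁(m). -/
open Filter Real MeasureTheory

lemma aux_id (t u Cc : ℝ) (ht : 0 < t) (hu : 0 < u) (hCt : Cc * t^3 = 1) :
    1/(2*u^2) + Cc*u = 3/(2*t^2) + (u-t)^2*(2*u+t)/(2*u^2*t^3) := by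
  have hCc : Cc = 1/t^3 := by field_simp; linarith
  rw [hCc]; field_simp; ring

lemma aux1 (t u r Cc : ℝ) (ht : 0 < t) (hCt : Cc * t^3 = 1) (h1 : t ≤ u)
    (h2 : u ≤ t + r) (h3 : r ≤ t) :
    1/(2*u^2) + Cc*u ≤ 3/(2*t^2) + 5*r^2/(2*t^4) := by
  have hu : 0 < u := lt_of_lt_of_le ht h1
  rw [aux_id t u Cc ht hu hCt]
  have hr : 0 ≤ r := by nlinarith
  have e1 : (u-t)^2 ≤ r^2 := by nlinarith
  have e2 : 2*u+t ≤ 5*t := by linarith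
  have h4 : (u-t)^2*(2*u+t) ≤ r^2*(5*t) := by
    nlinarith [mul_le_mul e1 e2 (by linarith) (by positivity : (0:ℝ) ≤ r^2)]
  have e3 : t^2 ≤ u^2 := by nlinarith
  have h5 : 2*t^2*t^3 ≤ 2*u^2*t^3 := by
    nlinarith [mul_le_mul_of_nonneg_right e3 (show (0:ℝ) ≤ 2*t^3 by positivity)]
  have h6 := div_le_div₀ (by positivity : (0:ℝ) ≤ r^2*(5*t)) h4
    (by positivity : (0:ℝ) < 2*t^2*t^3) h5
  have h7 : r^2*(5*t)/(2*t^2*t^3) = 5*r^2/(2*t^4) := by field_simp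
  rw [h7] at h6; linarith

lemma two_rpow : (2:ℝ)^((2:ℝ)/3) ≤ 2 := by
  calc (2:ℝ)^((2:ℝ)/3) ≤ 2^(1:ℝ) :=
        Real.rpow_le_rpow_of_exponent_le one_le_two (by norm_num)
    _ = 2 := Real.rpow_one 2
set_option maxHeartbeats 2000000 in
lemma aux3 (Cc t : ℝ) (hC : 1 < Cc) (ht0 : 0 < t) (ht1 : t < 1) (hCt : Cc * t^3 = 1) :
    ∃ η₀ : ℝ, 0 < η₀ ∧ η₀ ≤ 1/4 ∧ ∀ u : ℝ, 0 < u →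
      1/(2*u^2) + Cc*u ≤ 3/(2*t^2) * (1+η₀) →
      3/2 * (1 + 2^((2:ℝ)/3)/3 * (t-1)^2) ≤ 1/(2*u^2) + u := by
  set A : ℝ := (1-t)^2/(4*(Cc-1)*t) with hA
  have hApos : 0 < A := div_pos (by nlinarith) (by nlinarith)
  refine ⟨min (1/4) (A^2), lt_min (by norm_num) (by positivity), min_le_left _ _, ?_⟩
  intro u hu hyp
  set η₀ : ℝ := min (1/4) (A^2) with hη₀
  have hη₀pos : 0 < η₀ := lt_min (by norm_num) (by positivity)
  have hη₀le : η₀ ≤ 1/4 := min_le_left _ _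
  have hη₀A : η₀ ≤ A^2 := min_le_right _ _
  have h23 : (2:ℝ)^((2:ℝ)/3) ≤ 2 := two_rpow
  have hmulhint : (2:ℝ)^((2:ℝ)/3)*(t-1)^2 ≤ 2*(t-1)^2 :=
    mul_le_mul_of_nonneg_right h23 (sq_nonneg _)
  have hid := aux_id t u Cc ht0 hu hCt
  have hidt : 1/(2*t^2) + t = 3/2 + (t-1)^2*(2*t+1)/(2*t^2) := by
    field_simp; ring
  have hCct : Cc*t = 1/t^2 := by
    field_simp; linear_combination hCt
  have hphit : 3/2 + 3/2*(t-1)^2 ≤ 1/(2*t^2) + t := by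
    rw [hidt]
    have e : 3*t^2 ≤ 2*t+1 := by nlinarith
    have : 3/2*(t-1)^2 ≤ (t-1)^2*(2*t+1)/(2*t^2) := by
      rw [le_div_iff₀ (by positivity)]
      nlinarith [sq_nonneg (t-1)]
    linarith
  have hψmono : 3/(2*t^2) ≤ 1/(2*u^2) + Cc*u := by
    have : (0:ℝ) ≤ (u-t)^2*(2*u+t)/(2*u^2*t^3) := by positivity
    linarith
  have e4 : 3/(2*t^2) - (Cc-1)*t = 1/(2*t^2) + t := by
    have : (Cc-1)*t = Cc*t - t := by ring
    rw [this, hCct]; ring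
  have hsq' : (1-t)^2 = (t-1)^2 := by ring
  rcases le_or_gt u t with hut | hut
  · -- small u case
    have s1 : 3/(2*t^2) - (Cc-1)*u ≤ 1/(2*u^2) + u := by linarith
    have h1 : (Cc-1)*u ≤ (Cc-1)*t := by nlinarith
    linarith [sq_nonneg (t-1)]
  · -- u > t
    rcases le_or_gt u (2*t) with hu2t | hu2t
    · -- middle case
      have expand : 3/(2*t^2)*(1+η₀) = 3/(2*t^2) + 3/(2*t^2)*η₀ := by ring
      have hslack : (u-t)^2*(2*u+t)/(2*u^2*t^3) ≤ 3/(2*t^2)*η₀ := by linarith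
      have n1 : (u-t)^2*(3*t) ≤ (u-t)^2*(2*u+t) := by nlinarith [sq_nonneg (u-t)]
      have n2 : 2*u^2*t^3 ≤ 8*t^5 := by
        nlinarith [mul_le_mul hu2t hu2t hu.le (by positivity : (0:ℝ) ≤ 2*t)]
      have hnum : (u-t)^2*(3*t)/(8*t^5) ≤ (u-t)^2*(2*u+t)/(2*u^2*t^3) :=
        div_le_div₀ (by positivity : (0:ℝ) ≤ (u-t)^2*(2*u+t)) n1
          (by positivity : (0:ℝ) < 2*u^2*t^3) n2
      have hsq : (u-t)^2 ≤ (2*t*A)^2 := by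
        have e1 : (u-t)^2*(3*t)/(8*t^5) ≤ 3/(2*t^2)*η₀ := le_trans hnum hslack
        rw [div_le_iff₀ (by positivity)] at e1
        have erhs : 3/(2*t^2)*η₀*(8*t^5) = 12*t^3*η₀ := by field_simp; ring
        rw [erhs] at e1
        have e2 : (u-t)^2 ≤ 4*t^2*η₀ := by nlinarith [mul_pos ht0 hη₀pos]
        calc (u-t)^2 ≤ 4*t^2*η₀ := e2
          _ ≤ 4*t^2*A^2 := by nlinarith [sq_nonneg t]
          _ = (2*t*A)^2 := by ring
      have hle : u - t ≤ 2*t*A :=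
        (pow_le_pow_iff_left₀ (by linarith) (by positivity) two_ne_zero).mp hsq
      have h4t : 4*(Cc-1)*t ≠ 0 := by
        have : 0 < 4*(Cc-1)*t := by nlinarith
        exact ne_of_gt this
      have hAmul : (Cc-1)*(2*t*A) = (1-t)^2/2 := by
        rw [hA]; have hC1 : Cc - 1 ≠ 0 := by linarith
        field_simp; ring
      have e5 : (Cc-1)*(u-t) ≤ (1-t)^2/2 := by
        rw [← hAmul]
        exact mul_le_mul_of_nonneg_left hle (by linarith)
      have s1 : 3/(2*t^2) - (Cc-1)*u ≤ 1/(2*u^2) + u := by linarith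
      have s2 : (Cc-1)*u = (Cc-1)*t + (Cc-1)*(u-t) := by ring
      linarith [sq_nonneg (t-1)]
    · -- large u case : contradiction
      exfalso
      have e1 : Cc*u ≤ 3/(2*t^2)*(1+η₀) := by
        have : (0:ℝ) ≤ 1/(2*u^2) := by positivity
        linarith
      have e2 : 3/(2*t^2)*(1+η₀) ≤ 15/(8*t^2) := by
        have h0 : (0:ℝ) < 3/(2*t^2) := by positivity
        have q2 : 15/(8*t^2) = 3/(2*t^2)*(5/4) := by ring
        rw [q2]
        nlinarith
      have e3 : 2/t^2 < Cc*u := by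
        have hc0 : 0 < Cc := by linarith
        have : Cc*(2*t) < Cc*u := by nlinarith
        have q3 : 2/t^2 = Cc*(2*t) := by field_simp; linear_combination (-1)*hCt
        linarith
      have q1 : 2/t^2 = 2*(1/t^2) := by ring
      have q2 : 15/(8*t^2) = (15/8)*(1/t^2) := by ring
      have : (0:ℝ) < 1/t^2 := by positivity
      linarith

lemma ev_log_ge (c : ℝ) : ∀ᶠ x:ℝ in atTop, c ≤ Real.log x :=
  Real.tendsto_log_atTop.eventually_ge_atTop c

lemma ev_rpow_log (c κ : ℝ) (hκ : 0 < κ) : ∀ᶠ x:ℝ in atTop, c ≤ Real.log x ^ κ :=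
  ((tendsto_rpow_atTop hκ).comp Real.tendsto_log_atTop).eventually_ge_atTop c

lemma ev_const_rpow (c α : ℝ) (hα : 0 < α) : ∀ᶠ x:ℝ in atTop, c ≤ x ^ α :=
  (tendsto_rpow_atTop hα).eventually_ge_atTop c

lemma ev_poly (c κ α : ℝ) (hα : 0 < α) : ∀ᶠ x:ℝ in atTop, c * Real.log x ^ κ ≤ x ^ α := by
  have h := (isLittleO_log_rpow_rpow_atTop κ hα).bound (c := 1/(|c|+1)) (by positivity)
  filter_upwards [h, ev_log_ge 1, eventually_ge_atTop (0:ℝ)] with x hx hlog hx0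
  have h1 : (0:ℝ) ≤ Real.log x ^ κ := Real.rpow_nonneg (by linarith) κ
  have h2 : (0:ℝ) ≤ x ^ α := Real.rpow_nonneg hx0 α
  rw [Real.norm_eq_abs, Real.norm_eq_abs, abs_of_nonneg h1, abs_of_nonneg h2] at hx
  have c1 : c * Real.log x ^ κ ≤ |c| * Real.log x ^ κ :=
    mul_le_mul_of_nonneg_right (le_abs_self c) h1
  have c2 : |c| * Real.log x ^ κ ≤ |c| * (1/(|c|+1) * x^α) :=
    mul_le_mul_of_nonneg_left hx (abs_nonneg c)
  have c3 : |c| * (1/(|c|+1) * x^α) ≤ x ^ α := by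
    have hd : (0:ℝ) < |c|+1 := by positivity
    rw [div_mul_eq_mul_div, one_mul, mul_div_assoc']
    rw [div_le_iff₀ hd]
    nlinarith [abs_nonneg c, h2]
  linarith

lemma aux4 (F d h e : ℝ) (hF : 0 < F) (hh : 0 ≤ h) (he : 0 ≤ e) (he1 : e ≤ 1)
    (hd : 0 ≤ d) (hb : F*(2*e+2*h) ≤ d) : (F-d)*((1+h)*(1+e)) ≤ F*(1-e) := by
  nlinarith [mul_nonneg hh he, mul_nonneg hd (mul_nonneg hh he), mul_nonneg hd hh,
    mul_nonneg hd he, mul_nonneg (mul_nonneg hF.le hh) he]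

set_option maxHeartbeats 4000000 in
/-- Deterministic lemma on bias in model selection: if
`crit₁(m) = (a D_m⁻² + b D_m/n)(1+ε₁ₘ)` and `crit₂(m) = (a D_m⁻² + C b D_m/n)(1+ε₂ₘ)`
with `ε` small on the middle range of dimensions, and `crit₂` is bounded below on
small and large dimensions, then (for `n` large enough, depending only on the
constants) any minimizer `m̂` of `crit₂` satisfies
`crit₁(m̂) ≥ (1 + K(C) − ln(n)^{−κ₂/5})·inf_m crit₁(m)` with
`K(C) = 2^{2/3}·3⁻¹·(C^{−1/3}−1)² > 0`. -/
theorem stmt_3 (a b c₁ c₂ c₃ c₄ κ₁ κ₂ κ₃ κ₄ crich C : ℝ)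
    (ha : 0 < a) (hb : 0 < b) (hc₁ : 0 < c₁) (hc₂ : 0 < c₂) (hc₃ : 0 < c₃)
    (hc₄ : 0 < c₄) (hκ₁ : 0 < κ₁) (hκ₂ : 0 < κ₂) (hκ₃ : 0 < κ₃) (hκ₄ : 0 < κ₄)
    (hcrich : 0 < crich) (hC : 1 < C) :
    0 < 2 ^ ((2 : ℝ) / 3) / 3 * (C ^ (-(1 : ℝ) / 3) - 1) ^ 2 ∧
      ∃ n₀ : ℕ, 0 < n₀ ∧
        ∀ n : ℕ, n₀ ≤ n →
          ∀ (ι : Type) (D crit₁ crit₂ ε₁ ε₂ : ι → ℝ),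
            (∀ m, 1 ≤ D m ∧ D m ≤ (n : ℝ)) →
            (∀ x : ℝ, 1 ≤ x → x ≤ (n : ℝ) - crich → ∃ m, x ≤ D m ∧ D m ≤ x + crich) →
            (∀ m, crit₁ m = (a / (D m) ^ 2 + b * D m / n) * (1 + ε₁ m)) →
            (∀ m, crit₂ m = (a / (D m) ^ 2 + C * b * D m / n) * (1 + ε₂ m)) →
            (∀ m, Real.log n ^ κ₁ ≤ D m → D m ≤ c₁ * n / Real.log n →
              |ε₁ m| ≤ c₂ * Real.log n ^ (-κ₂) ∧ |ε₂ m| ≤ c₂ * Real.log n ^ (-κ₂)) →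
            (∀ m, D m < Real.log n ^ κ₁ → c₃ * Real.log n ^ (-κ₃) ≤ crit₂ m) →
            (∀ m, c₁ * n / Real.log n ≤ D m → c₄ * Real.log n ^ (-κ₄) ≤ crit₂ m) →
            ∀ mhat : ι, (∀ m, crit₂ mhat ≤ crit₂ m) →
              (1 + 2 ^ ((2 : ℝ) / 3) / 3 * (C ^ (-(1 : ℝ) / 3) - 1) ^ 2 -
                  Real.log n ^ (-κ₂ / 5)) * (⨅ m, crit₁ m) ≤ crit₁ mhat := by
  have hC0 : (0:ℝ) < C := lt_trans one_pos hC
  set t : ℝ := C ^ (-(1:ℝ)/3) with ht_def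
  have ht0 : 0 < t := Real.rpow_pos_of_pos hC0 _
  have ht1 : t < 1 := Real.rpow_lt_one_of_one_lt_of_neg hC (by norm_num)
  have ht3 : t^(3:ℕ) = C⁻¹ := by
    rw [ht_def, ← Real.rpow_natCast (C ^ (-(1:ℝ)/3)) 3, ← Real.rpow_mul hC0.le]
    norm_num [Real.rpow_neg_one]
  have hCt : C * t^3 = 1 := by
    rw [ht3]; field_simp
  have hKpos : 0 < 2 ^ ((2:ℝ)/3) / 3 * (t - 1) ^ 2 := by
    have h1 : 0 < (1-t)*(1-t) := mul_pos (by linarith) (by linarith)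
    have h2 : (0:ℝ) < 2 ^ ((2:ℝ)/3) / 3 := by positivity
    nlinarith
  refine ⟨hKpos, ?_⟩
  set Kc : ℝ := 2 ^ ((2:ℝ)/3) / 3 * (t - 1) ^ 2 with hKc_def
  set P : ℝ := (2*a/b) ^ ((1:ℝ)/3) with hP_def
  have hP : 0 < P := Real.rpow_pos_of_pos (by positivity) _
  have hP3 : P^(3:ℕ) = 2*a/b := by
    rw [hP_def, ← Real.rpow_natCast ((2*a/b) ^ ((1:ℝ)/3)) 3,
      ← Real.rpow_mul (by positivity : (0:ℝ) ≤ 2*a/b)]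
    norm_num
  have ha_eq : a = b*P^3/2 := by
    have hb' : b ≠ 0 := ne_of_gt hb
    field_simp [hP3]
    rw [hP3]; field_simp
  obtain ⟨η₀, hη₀pos, hη₀le, hcore⟩ := aux3 C t hC ht0 ht1 hCt
  set μ : ℝ := min (η₀/8) (1/10) with hμ_def
  have hμpos : 0 < μ := lt_min (by positivity) (by norm_num)
  have hμ8 : μ ≤ η₀/8 := min_le_left _ _
  have hμ10 : μ ≤ 1/10 := min_le_right _ _
  -- the eventual conditions
  have hev : ∀ᶠ x:ℝ in atTop,
      (3 ≤ x) ∧ (1 ≤ Real.log x) ∧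
      (1/(t*P) ≤ x^((1:ℝ)/3)) ∧
      (crich/(t*P) ≤ x^((1:ℝ)/3)) ∧
      ((1/(t*P)) * Real.log x ^ κ₁ ≤ x^((1:ℝ)/3)) ∧
      (2*P ≤ x^((2:ℝ)/3)) ∧
      (2*crich ≤ x) ∧
      ((2*P/c₁) * Real.log x ^ (1:ℝ) ≤ x^((2:ℝ)/3)) ∧
      ((2*crich/c₁) * Real.log x ^ (1:ℝ) ≤ x^((1:ℝ))) ∧
      (c₂/μ ≤ Real.log x ^ κ₂) ∧
      ((5*crich^2/(3*t^2*P^2))/μ ≤ x^((2:ℝ)/3)) ∧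
      ((6*b*P/(c₃*t^2)) * Real.log x ^ κ₃ ≤ x^((2:ℝ)/3)) ∧
      ((6*b*P/(c₄*t^2)) * Real.log x ^ κ₄ ≤ x^((2:ℝ)/3)) ∧
      (4*(1+Kc)*c₂ ≤ Real.log x ^ (4*κ₂/5)) ∧
      ((4*(1+Kc)*(5/3)*(crich/P)^2) * Real.log x ^ (κ₂/5) ≤ x^((2:ℝ)/3)) := by
    refine (eventually_ge_atTop 3).and <| (ev_log_ge 1).and <|
      (ev_const_rpow _ _ (by norm_num)).and <| (ev_const_rpow _ _ (by norm_num)).and <|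
      (ev_poly _ _ _ (by norm_num)).and <| (ev_const_rpow _ _ (by norm_num)).and <|
      (eventually_ge_atTop _).and <| (ev_poly _ _ _ (by norm_num)).and <|
      (ev_poly _ _ _ (by norm_num)).and <| (ev_rpow_log _ _ hκ₂).and <|
      (ev_const_rpow _ _ (by norm_num)).and <| (ev_poly _ _ _ (by norm_num)).and <|
      (ev_poly _ _ _ (by norm_num)).and <| (ev_rpow_log _ _ (by linarith)).and
      (ev_poly _ _ _ (by norm_num))
  have hevN : ∀ᶠ n:ℕ in atTop, _ := tendsto_natCast_atTop_atTop.eventually hev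
  obtain ⟨N, hN⟩ := eventually_atTop.mp hevN
  refine ⟨max N 1, Nat.lt_of_lt_of_le Nat.one_pos (le_max_right N 1), ?_⟩
  intro n hn ι D crit₁ crit₂ ε₁ ε₂ hD hrich h1def h2def hmid hsmall hlarge mhat hmin
  obtain ⟨hx3, hL1, c3', c4', c5', c6', c7', c8', c9', c10', c11', c12', c13', c14', c15'⟩ :=
    hN n (le_trans (le_max_left N 1) hn)
  -- basic quantities
  set x : ℝ := (n:ℝ) with hx_def
  have hx0 : (0:ℝ) < x := by linarith only [hx3]
  set L : ℝ := Real.log x with hL_def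
  have hL0 : (0:ℝ) < L := by linarith only [hL1]
  set q : ℝ := x ^ ((1:ℝ)/3) with hq_def
  have hq0 : 0 < q := Real.rpow_pos_of_pos hx0 _
  have hq2 : x ^ ((2:ℝ)/3) = q^2 := by
    rw [hq_def, ← Real.rpow_natCast (x ^ ((1:ℝ)/3)) 2, ← Real.rpow_mul hx0.le]
    norm_num
  have hq3 : x = q^3 := by
    rw [hq_def, ← Real.rpow_natCast (x ^ ((1:ℝ)/3)) 3, ← Real.rpow_mul hx0.le]
    norm_num
  rw [hq2] at c6' c8' c11' c12' c13' c15'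
  simp only [Real.rpow_one] at c8' c9'
  set Dstar : ℝ := P * q with hDstar_def
  have hDstar0 : 0 < Dstar := mul_pos hP hq0
  set s : ℝ := b * P * (q^2)⁻¹ with hs_def
  have hs0 : 0 < s := mul_pos (mul_pos hb hP) (inv_pos.mpr (pow_pos hq0 2))
  -- key reformulations of the criteria
  have keyf1 : ∀ Dm : ℝ, 0 < Dm →
      a/Dm^2 + b*Dm/x = s*(1/(2*(Dm/Dstar)^2) + Dm/Dstar) := by
    intro Dm hDm
    rw [ha_eq, hq3, hs_def, hDstar_def]
    field_simp [hDm.ne', hq0.ne', hP.ne', hb.ne']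
  have keyf2 : ∀ Dm : ℝ, 0 < Dm →
      a/Dm^2 + C*b*Dm/x = s*(1/(2*(Dm/Dstar)^2) + C*(Dm/Dstar)) := by
    intro Dm hDm
    rw [ha_eq, hq3, hs_def, hDstar_def]
    field_simp [hDm.ne', hq0.ne', hP.ne', hb.ne']
  have htP : 0 < t*P := mul_pos ht0 hP
  -- richness targets are admissible
  have g1 : 1 ≤ t * Dstar := by
    have h := (div_le_iff₀ htP).mp c3'
    rw [hDstar_def]; linarith only [h]
  have g2 : t*Dstar ≤ Dstar := by
    have h := mul_nonneg (by linarith only [ht1] : (0:ℝ) ≤ 1 - t) hDstar0.le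
    linarith only [h]
  have g3 : Dstar ≤ x/2 := by
    rw [hDstar_def, hq3]
    have h := mul_le_mul_of_nonneg_right c6' hq0.le
    linarith only [h]
  have g4 : t*Dstar ≤ x - crich := by linarith only [g2, g3, c7']
  have g5 : Dstar ≤ x - crich := by linarith only [g3, c7']
  -- pilot models
  obtain ⟨m₂, hm₂l, hm₂r⟩ := hrich (t*Dstar) g1 g4
  obtain ⟨m₁, hm₁l, hm₁r⟩ := hrich Dstar (le_trans g1 g2) g5
  -- middle range bounds
  have gL : L^κ₁ ≤ t*Dstar := by
    have h := mul_le_mul_of_nonneg_left c5' htP.le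
    have e : (t*P)*((1/(t*P))*L^κ₁) = L^κ₁ := by
      field_simp
    rw [e] at h
    rw [hDstar_def]; linarith only [h]
  have gU : Dstar + crich ≤ c₁*x/L := by
    rw [le_div_iff₀ hL0, hDstar_def, hq3]
    have e1 : 2*P*L ≤ c₁*q^2 := by
      have h := mul_le_mul_of_nonneg_left c8' hc₁.le
      have e : c₁*((2*P/c₁)*L) = 2*P*L := by
        field_simp
      rw [e] at h; linarith only [h]
    have e1' : 2*P*L*q ≤ c₁*q^2*q := mul_le_mul_of_nonneg_right e1 hq0.le
    have e2 : 2*crich*L ≤ c₁*x := by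
      have h := mul_le_mul_of_nonneg_left c9' hc₁.le
      have e : c₁*((2*crich/c₁)*L) = 2*crich*L := by
        field_simp
      rw [e] at h; linarith only [h]
    rw [hq3] at e2
    linarith only [e1', e2]
  have hDm₂0 : (0:ℝ) < D m₂ := by linarith only [(hD m₂).1]
  have hDm₁0 : (0:ℝ) < D m₁ := by linarith only [(hD m₁).1]
  have hm₂mid := hmid m₂ (le_trans gL hm₂l) (by linarith only [hm₂r, g2, gU])
  have hm₁mid := hmid m₁ (le_trans gL (le_trans g2 hm₁l)) (by linarith only [hm₁r, gU])
  -- epsilon bound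
  have hLκ₂pos : (0:ℝ) < L^κ₂ := Real.rpow_pos_of_pos hL0 _
  have hε0 : (0:ℝ) < c₂ * L^(-κ₂) :=
    mul_pos hc₂ (Real.rpow_pos_of_pos hL0 _)
  have hεμ : c₂ * L^(-κ₂) ≤ μ := by
    rw [Real.rpow_neg hL0.le]
    rw [div_le_iff₀ hμpos] at c10'
    rw [mul_inv_le_iff₀ hLκ₂pos]
    linarith only [c10']
  set ε : ℝ := c₂ * L^(-κ₂) with hε_def
  have hε10 : ε ≤ 1/10 := le_trans hεμ hμ10
  -- u₂ bounds
  set r : ℝ := crich / Dstar with hr_def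
  have hr0 : 0 < r := div_pos hcrich hDstar0
  have hrt : r ≤ t := by
    rw [hr_def, div_le_iff₀ hDstar0]
    have h := (div_le_iff₀ htP).mp c4'
    rw [hDstar_def]; linarith only [h]
  have hu₂l : t ≤ D m₂/Dstar := by
    rw [le_div_iff₀ hDstar0]; exact hm₂l
  have hu₂r : D m₂/Dstar ≤ t + r := by
    rw [div_le_iff₀ hDstar0, hr_def, add_mul, div_mul_cancel₀ crich hDstar0.ne']
    linarith only [hm₂r]
  have hψ₂ : 1/(2*(D m₂/Dstar)^2) + C*(D m₂/Dstar) ≤ 3/(2*t^2) + 5*r^2/(2*t^4) :=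
    aux1 t (D m₂/Dstar) r C ht0 hCt hu₂l hu₂r hrt
  -- η₁ ≤ μ
  have hq2pos : (0:ℝ) < q^2 := pow_pos hq0 2
  have ht2pos : (0:ℝ) < t^2 := pow_pos ht0 2
  have hη₁μ : 5*r^2/(3*t^2) ≤ μ := by
    rw [div_le_iff₀ hμpos] at c11'
    have e : 5*r^2/(3*t^2) = (5*crich^2/(3*t^2*P^2))/(q^2) := by
      rw [hr_def, hDstar_def]; ring
    rw [e, div_le_iff₀ hq2pos]
    linarith only [c11']
  have hη₁0 : 0 ≤ 5*r^2/(3*t^2) :=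
    div_nonneg (by positivity) (by linarith only [ht2pos])
  have hident : 3/(2*t^2) + 5*r^2/(2*t^4) = 3/(2*t^2)*(1 + 5*r^2/(3*t^2)) := by ring
  -- bound on crit₂ m₂
  have hu₂0 : (0:ℝ) ≤ D m₂/Dstar := (div_pos hDm₂0 hDstar0).le
  have hψ₂pos : (0:ℝ) ≤ 1/(2*(D m₂/Dstar)^2) + C*(D m₂/Dstar) :=
    add_nonneg (by positivity) (mul_nonneg hC0.le hu₂0)
  have hRpos : (0:ℝ) < 3/(2*t^2) := div_pos (by norm_num) (by linarith only [ht2pos])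
  have hcrit₂m₂ : crit₂ m₂ ≤ s*(3/(2*t^2)*(1+μ))*(1+ε) := by
    rw [h2def m₂, keyf2 (D m₂) hDm₂0]
    have hb1 : 1 + ε₂ m₂ ≤ 1 + ε := by
      have h := (abs_le.mp hm₂mid.2).2; linarith only [h]
    have hb2 : (0:ℝ) ≤ s*(1/(2*(D m₂/Dstar)^2) + C*(D m₂/Dstar)) :=
      mul_nonneg hs0.le hψ₂pos
    calc s*(1/(2*(D m₂/Dstar)^2) + C*(D m₂/Dstar)) * (1+ε₂ m₂)
        ≤ s*(1/(2*(D m₂/Dstar)^2) + C*(D m₂/Dstar)) * (1+ε) :=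
          mul_le_mul_of_nonneg_left hb1 hb2
      _ ≤ s*(3/(2*t^2)*(1+μ))*(1+ε) := by
          have h5 : 1/(2*(D m₂/Dstar)^2) + C*(D m₂/Dstar) ≤ 3/(2*t^2)*(1+μ) := by
            rw [hident] at hψ₂
            have h6 : 3/(2*t^2)*(1 + 5*r^2/(3*t^2)) ≤ 3/(2*t^2)*(1+μ) :=
              mul_le_mul_of_nonneg_left (by linarith only [hη₁μ]) hRpos.le
            linarith only [hψ₂, h6]
          have h7 := mul_le_mul_of_nonneg_left h5 hs0.le
          exact mul_le_mul_of_nonneg_right h7 (by linarith only [hε0])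
  -- exclusion bounds
  have hBnd2 : s*(3/(2*t^2)*(1+μ))*(1+ε) ≤ s*(3/t^2) := by
    have h45 : (1+μ)*(1+ε) ≤ 2 := by
      have p1 : μ*ε ≤ (1/10)*(1/10) :=
        mul_le_mul hμ10 hε10 hε0.le (by norm_num)
      nlinarith only [p1, hμ10, hε10, hμpos, hε0]
    have h5 : (3/(2*t^2)*(1+μ))*(1+ε) ≤ 3/t^2 := by
      have h6 : 3/(2*t^2)*((1+μ)*(1+ε)) ≤ 3/(2*t^2)*2 :=
        mul_le_mul_of_nonneg_left h45 hRpos.le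
      have e : 3/(2*t^2)*(2:ℝ) = 3/t^2 := by ring
      calc (3/(2*t^2)*(1+μ))*(1+ε) = 3/(2*t^2)*((1+μ)*(1+ε)) := by ring
        _ ≤ 3/(2*t^2)*2 := h6
        _ = 3/t^2 := e
    calc s*(3/(2*t^2)*(1+μ))*(1+ε) = s*((3/(2*t^2)*(1+μ))*(1+ε)) := by ring
      _ ≤ s*(3/t^2) := mul_le_mul_of_nonneg_left h5 hs0.le
  have hLκ₃pos : (0:ℝ) < L^κ₃ := Real.rpow_pos_of_pos hL0 _
  have hLκ₄pos : (0:ℝ) < L^κ₄ := Real.rpow_pos_of_pos hL0 _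
  have hsc₃ : s*(3/t^2) ≤ 1/2*(c₃*L^(-κ₃)) := by
    have C12 : 6*b*P*L^κ₃ ≤ c₃*t^2*q^2 := by
      have h := mul_le_mul_of_nonneg_left c12' (mul_pos hc₃ ht2pos).le
      have e : (c₃*t^2)*((6*b*P/(c₃*t^2))*L^κ₃) = 6*b*P*L^κ₃ := by
        field_simp
      rw [e] at h; linarith only [h]
    rw [Real.rpow_neg hL0.le, hs_def]
    rw [show b*P*(q^2)⁻¹*(3/t^2) = (3*b*P)/(t^2*q^2) by ring,
        show (1:ℝ)/2*(c₃*(L^κ₃)⁻¹) = c₃/(2*L^κ₃) by ring]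
    rw [div_le_div_iff₀ (mul_pos ht2pos hq2pos) (mul_pos two_pos hLκ₃pos)]
    linarith only [C12]
  have hsc₄ : s*(3/t^2) ≤ 1/2*(c₄*L^(-κ₄)) := by
    have C13 : 6*b*P*L^κ₄ ≤ c₄*t^2*q^2 := by
      have h := mul_le_mul_of_nonneg_left c13' (mul_pos hc₄ ht2pos).le
      have e : (c₄*t^2)*((6*b*P/(c₄*t^2))*L^κ₄) = 6*b*P*L^κ₄ := by
        field_simp
      rw [e] at h; linarith only [h]
    rw [Real.rpow_neg hL0.le, hs_def]
    rw [show b*P*(q^2)⁻¹*(3/t^2) = (3*b*P)/(t^2*q^2) by ring,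
        show (1:ℝ)/2*(c₄*(L^κ₄)⁻¹) = c₄/(2*L^κ₄) by ring]
    rw [div_le_div_iff₀ (mul_pos ht2pos hq2pos) (mul_pos two_pos hLκ₄pos)]
    linarith only [C13]
  have hchain : crit₂ mhat ≤ s*(3/(2*t^2)*(1+μ))*(1+ε) := le_trans (hmin m₂) hcrit₂m₂
  have hchain₃ : crit₂ mhat ≤ 1/2*(c₃*L^(-κ₃)) :=
    le_trans hchain (le_trans hBnd2 hsc₃)
  have hchain₄ : crit₂ mhat ≤ 1/2*(c₄*L^(-κ₄)) :=
    le_trans hchain (le_trans hBnd2 hsc₄)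
  -- mhat is in the middle range
  have hnot1 : L^κ₁ ≤ D mhat := by
    by_contra hlt
    push_neg at hlt
    have h1 := hsmall mhat hlt
    have h3 : (0:ℝ) < c₃*L^(-κ₃) :=
      mul_pos hc₃ (Real.rpow_pos_of_pos hL0 _)
    linarith only [h1, h3, hchain₃]
  have hnot2 : D mhat ≤ c₁*x/L := by
    by_contra hlt
    push_neg at hlt
    have h1 := hlarge mhat hlt.le
    have h3 : (0:ℝ) < c₄*L^(-κ₄) :=
      mul_pos hc₄ (Real.rpow_pos_of_pos hL0 _)
    linarith only [h1, h3, hchain₄]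
  have hmhmid := hmid mhat hnot1 hnot2
  have hDmh0 : (0:ℝ) < D mhat := by linarith only [(hD mhat).1]
  have humh0 : (0:ℝ) < D mhat/Dstar := div_pos hDmh0 hDstar0
  have hψhpos : (0:ℝ) ≤ 1/(2*(D mhat/Dstar)^2) + C*(D mhat/Dstar) :=
    add_nonneg (by positivity) (mul_nonneg hC0.le humh0.le)
  have h1me : (0:ℝ) < 1 - ε := by linarith only [hε10]
  -- extract the dimension bound for mhat
  have hψh : 1/(2*(D mhat/Dstar)^2) + C*(D mhat/Dstar) ≤ 3/(2*t^2)*(1+η₀) := by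
    have hlow : s*(1/(2*(D mhat/Dstar)^2) + C*(D mhat/Dstar))*(1-ε) ≤ crit₂ mhat := by
      rw [h2def mhat, keyf2 (D mhat) hDmh0]
      have hb1 : 1 - ε ≤ 1 + ε₂ mhat := by
        have h := (abs_le.mp hmhmid.2).1; linarith only [h]
      exact mul_le_mul_of_nonneg_left hb1 (mul_nonneg hs0.le hψhpos)
    have h8 : s*(1/(2*(D mhat/Dstar)^2) + C*(D mhat/Dstar))*(1-ε)
        ≤ s*(3/(2*t^2)*(1+μ))*(1+ε) := le_trans hlow hchain
    have h9 : (1/(2*(D mhat/Dstar)^2) + C*(D mhat/Dstar))*(1-ε)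
        ≤ (3/(2*t^2)*(1+μ))*(1+ε) := by
      have h8' : s*((1/(2*(D mhat/Dstar)^2) + C*(D mhat/Dstar))*(1-ε))
          ≤ s*((3/(2*t^2)*(1+μ))*(1+ε)) := by linarith only [h8]
      exact (mul_le_mul_iff_of_pos_left hs0).mp h8'
    have h10a : (1+μ)*(1+ε) ≤ (1+η₀)*(1-ε) := by
      have p1 : μ*ε ≤ μ*(1/10) := mul_le_mul_of_nonneg_left hε10 hμpos.le
      have p2 : η₀*ε ≤ η₀*(1/10) := mul_le_mul_of_nonneg_left hε10 hη₀pos.le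
      nlinarith only [p1, p2, hμ8, hεμ, hμpos, hη₀pos]
    have h10 : (3/(2*t^2)*(1+μ))*(1+ε) ≤ (3/(2*t^2)*(1+η₀))*(1-ε) := by
      have h := mul_le_mul_of_nonneg_left h10a hRpos.le
      calc (3/(2*t^2)*(1+μ))*(1+ε) = 3/(2*t^2)*((1+μ)*(1+ε)) := by ring
        _ ≤ 3/(2*t^2)*((1+η₀)*(1-ε)) := h
        _ = (3/(2*t^2)*(1+η₀))*(1-ε) := by ring
    exact (mul_le_mul_iff_of_pos_right h1me).mp (le_trans h9 h10)
  have hφu' : 3/2*(1+Kc) ≤ 1/(2*(D mhat/Dstar)^2) + D mhat/Dstar := by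
    rw [hKc_def]
    exact hcore (D mhat/Dstar) humh0 hψh
  -- lower bound for crit₁ mhat
  have hKc0 : 0 < Kc := hKpos
  have hlower : s*(3/2*(1+Kc))*(1-ε) ≤ crit₁ mhat := by
    rw [h1def mhat, keyf1 (D mhat) hDmh0]
    have hb1 : 1 - ε ≤ 1 + ε₁ mhat := by
      have h := (abs_le.mp hmhmid.1).1; linarith only [h]
    have hb2 : (0:ℝ) ≤ s*(1/(2*(D mhat/Dstar)^2) + D mhat/Dstar) :=
      mul_nonneg hs0.le (add_nonneg (by positivity) humh0.le)
    calc s*(3/2*(1+Kc))*(1-ε)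
        ≤ s*(1/(2*(D mhat/Dstar)^2) + D mhat/Dstar)*(1-ε) :=
          mul_le_mul_of_nonneg_right
            (mul_le_mul_of_nonneg_left hφu' hs0.le) h1me.le
      _ ≤ s*(1/(2*(D mhat/Dstar)^2) + D mhat/Dstar)*(1+ε₁ mhat) :=
          mul_le_mul_of_nonneg_left hb1 hb2
  have hcrit₁mhat0 : (0:ℝ) ≤ crit₁ mhat := by
    have h12 : (0:ℝ) ≤ 3/2*(1+Kc) := by linarith only [hKc0]
    have h13 : (0:ℝ) ≤ s*(3/2*(1+Kc))*(1-ε) :=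
      mul_nonneg (mul_nonneg hs0.le h12) h1me.le
    linarith only [h13, hlower]
  -- upper bound for crit₁ m₁
  have hu₁l : 1 ≤ D m₁/Dstar := by rw [le_div_iff₀ hDstar0, one_mul]; exact hm₁l
  have hu₁r : D m₁/Dstar ≤ 1 + r := by
    rw [div_le_iff₀ hDstar0, hr_def, add_mul, div_mul_cancel₀ crich hDstar0.ne', one_mul]
    linarith only [hm₁r]
  have hφ₁ : 1/(2*(D m₁/Dstar)^2) + 1*(D m₁/Dstar) ≤ 3/(2*1^2) + 5*r^2/(2*1^4) :=
    aux1 1 (D m₁/Dstar) r 1 one_pos (by norm_num) hu₁l hu₁r (by linarith only [hrt, ht1])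
  have hφ₁' : 1/(2*(D m₁/Dstar)^2) + D m₁/Dstar ≤ 3/2*(1 + 5*r^2/3) := by
    have e : 3/(2*(1:ℝ)^2) + 5*r^2/(2*1^4) = 3/2*(1 + 5*r^2/3) := by ring
    rw [e] at hφ₁; linarith only [hφ₁]
  have hcrit₁m₁ : crit₁ m₁ ≤ s*(3/2*(1 + 5*r^2/3))*(1+ε) := by
    rw [h1def m₁, keyf1 (D m₁) hDm₁0]
    have hu₁0 : (0:ℝ) ≤ D m₁/Dstar := (div_pos hDm₁0 hDstar0).le
    have hb1 : 1 + ε₁ m₁ ≤ 1 + ε := by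
      have h := (abs_le.mp hm₁mid.1).2; linarith only [h]
    have hb2 : (0:ℝ) ≤ s*(1/(2*(D m₁/Dstar)^2) + D m₁/Dstar) :=
      mul_nonneg hs0.le (add_nonneg (by positivity) hu₁0)
    calc s*(1/(2*(D m₁/Dstar)^2) + D m₁/Dstar)*(1+ε₁ m₁)
        ≤ s*(1/(2*(D m₁/Dstar)^2) + D m₁/Dstar)*(1+ε) :=
          mul_le_mul_of_nonneg_left hb1 hb2
      _ ≤ s*(3/2*(1 + 5*r^2/3))*(1+ε) :=
          mul_le_mul_of_nonneg_right
            (mul_le_mul_of_nonneg_left hφ₁' hs0.le) (by linarith only [hε0])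
  -- the delta bounds
  have hδ0 : (0:ℝ) < L^(-κ₂/5) := Real.rpow_pos_of_pos hL0 _
  have hδ1 : L^(-κ₂/5) ≤ 1 :=
    Real.rpow_le_one_of_one_le_of_nonpos hL1 (by linarith only [hκ₂])
  have hδrw : L^(-κ₂/5) = L^(4*κ₂/5) * L^(-κ₂) := by
    rw [← Real.rpow_add hL0]
    congr 1
    ring
  have hA1 : 2*(1+Kc)*ε ≤ 1/2*L^(-κ₂/5) := by
    rw [hδrw, hε_def]
    have h := mul_le_mul_of_nonneg_right c14' (Real.rpow_nonneg hL0.le (-κ₂))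
    linarith only [h]
  have hLκ₂5pos : (0:ℝ) < L^(κ₂/5) := Real.rpow_pos_of_pos hL0 _
  have hA2 : 2*(1+Kc)*(5*r^2/3) ≤ 1/2*L^(-κ₂/5) := by
    have C15 : 4*(1+Kc)*(5/3)*crich^2*L^(κ₂/5) ≤ P^2*q^2 := by
      have h := mul_le_mul_of_nonneg_left c15' (by positivity : (0:ℝ) ≤ P^2)
      have e : P^2*((4*(1+Kc)*(5/3)*(crich/P)^2)*L^(κ₂/5))
          = 4*(1+Kc)*(5/3)*crich^2*L^(κ₂/5) := by
        field_simp [hP.ne']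
      rw [e] at h; linarith only [h]
    rw [show (-κ₂/5 : ℝ) = -(κ₂/5) by ring, Real.rpow_neg hL0.le]
    rw [show 2*(1+Kc)*(5*r^2/3) = (2*(1+Kc)*(5/3)*crich^2)/(P^2*q^2) by
      rw [hr_def, hDstar_def]; ring]
    rw [show (1:ℝ)/2*(L^(κ₂/5))⁻¹ = 1/(2*L^(κ₂/5)) by ring]
    rw [div_le_div_iff₀ (mul_pos (pow_pos hP 2) hq2pos) (mul_pos two_pos hLκ₂5pos)]
    linarith only [C15]
  have hδb : (1+Kc)*(2*ε + 2*(5*r^2/3)) ≤ L^(-κ₂/5) := by linarith only [hA1, hA2]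
  -- conclusion
  have hfac0 : (0:ℝ) ≤ 1 + Kc - L^(-κ₂/5) := by linarith only [hδ1, hKc0]
  rcases em (BddBelow (Set.range crit₁)) with hbdd | hbdd
  · have hinf := ciInf_le hbdd m₁
    have harith : (1+Kc-L^(-κ₂/5))*((1 + 5*r^2/3)*(1+ε)) ≤ (1+Kc)*(1-ε) :=
      aux4 (1+Kc) (L^(-κ₂/5)) (5*r^2/3) ε (by linarith only [hKc0]) (by positivity)
        hε0.le (by linarith only [hε10]) hδ0.le hδb
    calc (1+Kc-L^(-κ₂/5))*(⨅ m, crit₁ m)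
        ≤ (1+Kc-L^(-κ₂/5))*(crit₁ m₁) := mul_le_mul_of_nonneg_left hinf hfac0
      _ ≤ (1+Kc-L^(-κ₂/5))*(s*(3/2*(1 + 5*r^2/3))*(1+ε)) :=
          mul_le_mul_of_nonneg_left hcrit₁m₁ hfac0
      _ = (s*(3/2))*((1+Kc-L^(-κ₂/5))*((1 + 5*r^2/3)*(1+ε))) := by ring
      _ ≤ (s*(3/2))*((1+Kc)*(1-ε)) :=
          mul_le_mul_of_nonneg_left harith (mul_nonneg hs0.le (by norm_num))
      _ = s*(3/2*(1+Kc))*(1-ε) := by ring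
      _ ≤ crit₁ mhat := hlower
  · rw [Real.iInf_of_not_bddBelow hbdd, mul_zero]
    exact hcrit₁mhat0
end

section
/- In the histogram regression framework, E[ Σ_{λ∈Λ_m} p_λ·1_{p̂_λ>0}·(β̂_λ − β_λ)² ] = n⁻¹ Σ_{λ∈Λ_m} e⁰(n,p_λ)·σ_λ², where e⁰(n,p) := E[Z]·E[Z⁻¹·1_{Z>0}] for Z following the binomial distribution B(n,p). -/
open MeasureTheory ProbabilityTheory

lemma aux_indep_prod {Ω : Type*} [MeasureSpace Ω] [IsProbabilityMeasure (ℙ : Measure Ω)]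
    {n : ℕ} {W : Fin n → Ω → ℝ} (hmeas : ∀ i, Measurable (W i))
    (hint : ∀ i, Integrable (W i) ℙ)
    (hind : iIndepFun W ℙ) (s : Finset (Fin n)) :
    Integrable (fun ω => ∏ k ∈ s, W k ω) ℙ ∧
      (∫ ω, ∏ k ∈ s, W k ω) = ∏ k ∈ s, ∫ ω, W k ω := by
  classical
  induction s using Finset.induction_on with
  | empty => simp
  | @insert i s hi ih =>
    have hInd : IndepFun (∏ j ∈ s, W j) (W i) ℙ :=
      hind.indepFun_finsetProd_of_notMem hmeas hi
    have hprod : (∏ j ∈ s, W j) = fun ω => ∏ j ∈ s, W j ω := by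
      ext ω; simp [Finset.prod_apply]
    rw [hprod] at hInd
    have h1 : Integrable (fun ω => (∏ j ∈ s, W j ω) * W i ω) ℙ :=
      hInd.integrable_mul ih.1 (hint i)
    have h2 := hInd.integral_mul_eq_mul_integral ih.1.aestronglyMeasurable (hint i).aestronglyMeasurable
    constructor
    · refine h1.congr (Filter.Eventually.of_forall fun ω => ?_)
      simp only [Finset.prod_insert hi]; ring
    · simp only [Finset.prod_insert hi]
      calc (∫ ω, W i ω * ∏ k ∈ s, W k ω) = ∫ ω, (∏ k ∈ s, W k ω) * W i ω := by
            congr 1; ext ω; ring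
        _ = (∫ ω, ∏ k ∈ s, W k ω) * ∫ ω, W i ω := by
            have := h2; simpa [Pi.mul_apply] using this
        _ = _ := by rw [ih.2]; ring

lemma cell_lemma {Ω : Type*} [MeasureSpace Ω] [IsProbabilityMeasure (ℙ : Measure Ω)]
    {𝒳 : Type*} [MeasurableSpace 𝒳] (n : ℕ)
    (X : Fin n → Ω → 𝒳) (Y : Fin n → Ω → ℝ)
    (P : Measure (𝒳 × ℝ)) (hP : IsProbabilityMeasure P)
    (hmeas : ∀ i, Measurable fun ω => (X i ω, Y i ω))
    (hlaw : ∀ i, Measure.map (fun ω => (X i ω, Y i ω)) ℙ = P)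
    (hindep : iIndepFun (fun i ω => (X i ω, Y i ω)) ℙ)
    (hY2 : Integrable (fun z : 𝒳 × ℝ => z.2 ^ 2) P)
    (A : Set 𝒳) (hA : MeasurableSet A)
    (p β σ2 : ℝ) (hp : p = (P {z | z.1 ∈ A}).toReal)
    (hβ : β = (∫ z in {z : 𝒳 × ℝ | z.1 ∈ A}, z.2 ∂P) / (P {z | z.1 ∈ A}).toReal)
    (hσ2 : σ2 = (∫ z in {z : 𝒳 × ℝ | z.1 ∈ A}, (z.2 - β) ^ 2 ∂P) / (P {z | z.1 ∈ A}).toReal) :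
    Integrable (fun ω => if 0 < (∑ i, Set.indicator A (fun _ => 1) (X i ω) : ℕ) then
        p * ((∑ i, Set.indicator A (fun _ => Y i ω) (X i ω)) /
          ((∑ i, Set.indicator A (fun _ => 1) (X i ω) : ℕ) : ℝ) - β) ^ 2 else 0) ℙ ∧
    (∫ ω, (if 0 < (∑ i, Set.indicator A (fun _ => 1) (X i ω) : ℕ) then
        p * ((∑ i, Set.indicator A (fun _ => Y i ω) (X i ω)) /
          ((∑ i, Set.indicator A (fun _ => 1) (X i ω) : ℕ) : ℝ) - β) ^ 2 else 0)) =
      σ2 * ∑ k ∈ Finset.Icc 1 n, (k : ℝ)⁻¹ * (n.choose k : ℝ) * p ^ (k + 1) * (1 - p) ^ (n - k) := by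
  classical
  set B : Set (𝒳 × ℝ) := {z | z.1 ∈ A} with hBdef
  have hBm : MeasurableSet B := measurable_fst hA
  set χ : 𝒳 × ℝ → ℝ := B.indicator (fun _ => 1) with hχdef
  have hχm : Measurable χ := measurable_const.indicator hBm
  set Z : Fin n → Ω → 𝒳 × ℝ := fun i ω => (X i ω, Y i ω) with hZdef
  set φ : Finset (Fin n) → Fin n → Fin n → Fin n → (𝒳 × ℝ) → ℝ :=
    fun S i j k z => if k ∈ S then
      χ z * (if k = i then z.2 - β else 1) * (if k = j then z.2 - β else 1)
    else 1 - χ z with hφdef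
  -- basic measurability
  have hm2 : Measurable fun z : 𝒳 × ℝ => z.2 - β := measurable_snd.sub measurable_const
  have hφm : ∀ S i j k, Measurable (φ S i j k) := by
    intro S i j k
    simp only [hφdef]
    split_ifs <;>
      first
      | exact ((hχm.mul hm2).mul hm2)
      | exact ((hχm.mul hm2).mul measurable_const)
      | exact ((hχm.mul measurable_const).mul hm2)
      | exact ((hχm.mul measurable_const).mul measurable_const)
      | exact measurable_const.sub hχm
  -- integrability over P
  have hYm : Measurable fun z : 𝒳 × ℝ => z.2 := measurable_snd
  have hYint : Integrable (fun z : 𝒳 × ℝ => z.2) P := by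
    have h2 : MemLp (fun z : 𝒳 × ℝ => z.2) 2 P :=
      (memLp_two_iff_integrable_sq hYm.aestronglyMeasurable).mpr hY2
    exact memLp_one_iff_integrable.mp (h2.mono_exponent (by norm_num))
  have hsqint : Integrable (fun z : 𝒳 × ℝ => (z.2 - β) ^ 2) P := by
    have : (fun z : 𝒳 × ℝ => (z.2 - β) ^ 2)
        = fun z => z.2 ^ 2 - (2 * β) * z.2 + β ^ 2 := by ext z; ring
    rw [this]
    exact (hY2.sub (hYint.const_mul _)).add (integrable_const _)
  have hsubint : Integrable (fun z : 𝒳 × ℝ => z.2 - β) P := hYint.sub (integrable_const _)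
  have hind1 : ∀ f : 𝒳 × ℝ → ℝ, (fun z => χ z * f z) = B.indicator f := by
    intro f; ext z; by_cases hz : z ∈ B <;>
      simp [hχdef, Set.indicator_of_mem, Set.indicator_of_notMem, hz]
  have J0 : Integrable χ P := (integrable_const 1).indicator hBm
  have Jc : Integrable (fun z => 1 - χ z) P := (integrable_const 1).sub J0
  have J1 : Integrable (fun z : 𝒳 × ℝ => χ z * (z.2 - β)) P := by
    rw [hind1]; exact hsubint.indicator hBm
  have J2 : Integrable (fun z : 𝒳 × ℝ => χ z * (z.2 - β) ^ 2) P := by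
    rw [hind1]; exact hsqint.indicator hBm
  have hφint : ∀ S i j k, Integrable (φ S i j k) P := by
    intro S i j k
    simp only [hφdef]
    split_ifs
    · exact J2.congr (Filter.Eventually.of_forall fun z => by ring)
    · exact J1.congr (Filter.Eventually.of_forall fun z => by ring)
    · exact J1.congr (Filter.Eventually.of_forall fun z => by ring)
    · exact J0.congr (Filter.Eventually.of_forall fun z => by ring)
    · exact Jc
  -- integral values
  have hvχ : (∫ z, χ z ∂P) = p := by
    rw [hχdef, integral_indicator_const (1 : ℝ) hBm, hp]; simp [measureReal_def]
  have hv1 : (∫ z, χ z * (z.2 - β) ∂P) = 0 := by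
    rw [hind1, integral_indicator hBm]
    by_cases h0 : P B = 0
    · rw [Measure.restrict_eq_zero.mpr h0]; simp
    · have hpne : (P B).toReal ≠ 0 := by
        simp [ENNReal.toReal_eq_zero_iff, h0, (measure_lt_top P B).ne]
      have : (∫ z in B, (z.2 - β) ∂P) = (∫ z in B, z.2 ∂P) - (P B).toReal * β := by
        rw [integral_sub (hYint.restrict) (integrable_const _)]
        rw [setIntegral_const]; simp [smul_eq_mul, measureReal_def]
      rw [this, hβ]
      field_simp
      ring
  have hv2 : (∫ z, χ z * (z.2 - β) ^ 2 ∂P) = p * σ2 := by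
    rw [hind1, integral_indicator hBm]
    by_cases h0 : P B = 0
    · rw [Measure.restrict_eq_zero.mpr h0, hp]
      simp [hBdef ▸ h0, h0]
    · have hpne : (P B).toReal ≠ 0 := by
        simp [ENNReal.toReal_eq_zero_iff, h0, (measure_lt_top P B).ne]
      rw [hσ2, hp]
      field_simp
  -- transfer to Ω
  have hZm : ∀ k, Measurable (Z k) := hmeas
  have hWm : ∀ S i j k, Measurable fun ω => φ S i j k (Z k ω) :=
    fun S i j k => (hφm S i j k).comp (hZm k)
  have hWint : ∀ S i j k, Integrable (fun ω => φ S i j k (Z k ω)) ℙ := by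
    intro S i j k
    have h := hφint S i j k
    rw [← hlaw k] at h
    exact (integrable_map_measure ((hφm S i j k).aestronglyMeasurable.mono_ac
      Measure.AbsolutelyContinuous.rfl) (hZm k).aemeasurable).mp h
  have hWval : ∀ S i j k, (∫ ω, φ S i j k (Z k ω)) = ∫ z, φ S i j k z ∂P := by
    intro S i j k
    rw [← hlaw k, integral_map (hZm k).aemeasurable]
    exact (hφm S i j k).aestronglyMeasurable.mono_ac Measure.AbsolutelyContinuous.rfl
  have hWindep : ∀ S i j, iIndepFun
      (fun k ω => φ S i j k (Z k ω)) ℙ :=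
    fun S i j => hindep.comp (fun k => φ S i j k) (fun k => hφm S i j k)
  have hprod : ∀ S i j, Integrable (fun ω => ∏ k, φ S i j k (Z k ω)) ℙ ∧
      (∫ ω, ∏ k, φ S i j k (Z k ω)) = ∏ k, ∫ z, φ S i j k z ∂P := by
    intro S i j
    obtain ⟨h1, h2⟩ := aux_indep_prod (W := fun k ω => φ S i j k (Z k ω))
      (fun k => hWm S i j k) (fun k => hWint S i j k) (hWindep S i j) Finset.univ
    exact ⟨h1, by rw [h2]; exact Finset.prod_congr rfl fun k _ => hWval S i j k⟩
  -- the pointwise identity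
  have hpoint : ∀ ω, (if 0 < (∑ i, Set.indicator A (fun _ => 1) (X i ω) : ℕ) then
        p * ((∑ i, Set.indicator A (fun _ => Y i ω) (X i ω)) /
          ((∑ i, Set.indicator A (fun _ => 1) (X i ω) : ℕ) : ℝ) - β) ^ 2 else 0)
      = ∑ S ∈ (Finset.univ : Finset (Fin n)).powerset,
          p * ((S.card : ℝ)⁻¹) ^ 2 * ∑ i ∈ S, ∑ j ∈ S, ∏ k, φ S i j k (Z k ω) := by
    intro ω
    set S₀ : Finset (Fin n) := Finset.univ.filter (fun i => X i ω ∈ A) with hS₀def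
    have hmemS₀ : ∀ k, k ∈ S₀ ↔ X k ω ∈ A := by
      intro k; simp [hS₀def]
    have hχval : ∀ k, χ (Z k ω) = if X k ω ∈ A then 1 else 0 := by
      intro k
      by_cases h : X k ω ∈ A <;>
        simp [hχdef, hZdef, Set.indicator_apply, hBdef, h]
    have hcnt : (∑ i, Set.indicator A (fun _ => 1) (X i ω) : ℕ) = S₀.card := by
      rw [hS₀def, Finset.card_filter]
      refine Finset.sum_congr rfl fun i _ => ?_
      by_cases h : X i ω ∈ A <;> simp [Set.indicator_apply, h]
    have hsumY : (∑ i, Set.indicator A (fun _ => Y i ω) (X i ω)) = ∑ i ∈ S₀, Y i ω := by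
      rw [hS₀def, Finset.sum_filter]
      refine Finset.sum_congr rfl fun i _ => ?_
      by_cases h : X i ω ∈ A <;> simp [Set.indicator_apply, h]
    have hRHS : (∑ S ∈ (Finset.univ : Finset (Fin n)).powerset,
          p * ((S.card : ℝ)⁻¹) ^ 2 * ∑ i ∈ S, ∑ j ∈ S, ∏ k, φ S i j k (Z k ω))
        = p * ((S₀.card : ℝ)⁻¹) ^ 2 * ∑ i ∈ S₀, ∑ j ∈ S₀, ∏ k, φ S₀ i j k (Z k ω) := by
      refine Finset.sum_eq_single S₀ (fun S _ hne => ?_)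
        (fun h => absurd (Finset.mem_powerset.mpr (Finset.subset_univ _)) h)
      have hz : ∀ i ∈ S, ∀ j ∈ S, (∏ k, φ S i j k (Z k ω)) = 0 := by
        intro i hi j hj
        by_cases hsub : ∀ k ∈ S, X k ω ∈ A
        · have hSsub : S ⊆ S₀ := fun k hk => (hmemS₀ k).mpr (hsub k hk)
          obtain ⟨k, hk₀, hkS⟩ := Finset.exists_of_ssubset (hSsub.ssubset_of_ne hne)
          refine Finset.prod_eq_zero (Finset.mem_univ k) ?_
          have hXk : X k ω ∈ A := (hmemS₀ k).mp hk₀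
          simp [hφdef, hkS, hχval k, hXk]
        · push_neg at hsub
          obtain ⟨k, hkS, hknA⟩ := hsub
          refine Finset.prod_eq_zero (Finset.mem_univ k) ?_
          simp [hφdef, hkS, hχval k, hknA]
      rw [Finset.sum_eq_zero fun i hi => Finset.sum_eq_zero fun j hj => hz i hi j hj,
        mul_zero]
    rw [hRHS]
    have hprodval : ∀ i ∈ S₀, ∀ j ∈ S₀,
        (∏ k, φ S₀ i j k (Z k ω)) = (Y i ω - β) * (Y j ω - β) := by
      intro i hi j hj
      have h1 : ∀ k, φ S₀ i j k (Z k ω) = (if k ∈ S₀ then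
          (if k = i then Y k ω - β else 1) * (if k = j then Y k ω - β else 1) else 1) := by
        intro k
        by_cases hk : k ∈ S₀
        · have hXk : X k ω ∈ A := (hmemS₀ k).mp hk
          have hχk := hχval k
          simp only [hZdef] at hχk
          simp [hφdef, hk, hχk, hXk, hZdef]
        · have hXk : X k ω ∉ A := fun h => hk ((hmemS₀ k).mpr h)
          simp [hφdef, hk, hχval k, hXk]
      calc (∏ k, φ S₀ i j k (Z k ω))
          = ∏ k ∈ Finset.univ, (if k ∈ S₀ then
              (if k = i then Y k ω - β else 1) * (if k = j then Y k ω - β else 1) else 1) :=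
            Finset.prod_congr rfl fun k _ => h1 k
        _ = ∏ k ∈ S₀, ((if k = i then Y k ω - β else 1) * (if k = j then Y k ω - β else 1)) := by
            rw [Finset.prod_ite_mem, Finset.univ_inter]
        _ = (∏ k ∈ S₀, (if k = i then Y k ω - β else 1)) *
              ∏ k ∈ S₀, (if k = j then Y k ω - β else 1) := Finset.prod_mul_distrib
        _ = (Y i ω - β) * (Y j ω - β) := by
            rw [Finset.prod_ite_eq' S₀ i, Finset.prod_ite_eq' S₀ j, if_pos hi, if_pos hj]
    have hdsum : (∑ i ∈ S₀, ∑ j ∈ S₀, ∏ k, φ S₀ i j k (Z k ω))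
        = (∑ i ∈ S₀, (Y i ω - β)) ^ 2 := by
      rw [sq, Finset.sum_mul_sum]
      exact Finset.sum_congr rfl fun i hi =>
        Finset.sum_congr rfl fun j hj => hprodval i hi j hj
    rw [hdsum]
    by_cases hS0 : S₀ = ∅
    · simp [hcnt, hS0]
    · have hc : 0 < S₀.card := Finset.card_pos.mpr (Finset.nonempty_iff_ne_empty.mpr hS0)
      have hcR : ((S₀.card : ℕ) : ℝ) ≠ 0 := Nat.cast_ne_zero.mpr hc.ne'
      rw [if_pos (by rw [hcnt]; exact hc), hsumY, hcnt]
      have hsum : (∑ i ∈ S₀, (Y i ω - β)) = (∑ i ∈ S₀, Y i ω) - S₀.card * β := by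
        rw [Finset.sum_sub_distrib, Finset.sum_const, nsmul_eq_mul]
      rw [hsum]
      have key : (∑ i ∈ S₀, Y i ω) / (S₀.card : ℝ) - β
          = ((S₀.card : ℝ))⁻¹ * ((∑ i ∈ S₀, Y i ω) - (S₀.card : ℝ) * β) := by
        rw [mul_sub, inv_mul_eq_div, ← mul_assoc, inv_mul_cancel₀ hcR, one_mul]
      rw [key, mul_pow]
      ring
  -- integral values of φ
  have hvone : (∫ z, (1 : ℝ) - χ z ∂P) = 1 - p := by
    rw [integral_sub (integrable_const 1) J0, hvχ]
    simp
  have hvform : ∀ S i j k, (∫ z, φ S i j k z ∂P) =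
      if k ∈ S then (if k = i then (if k = j then p * σ2 else 0)
        else (if k = j then 0 else p)) else (1 - p) := by
    intro S i j k
    simp only [hφdef]
    split_ifs
    · rw [← hv2]; congr 1; ext z; ring
    · rw [← hv1]; congr 1; ext z; ring
    · rw [← hv1]; congr 1; ext z; ring
    · rw [← hvχ]; congr 1; ext z; ring
    · exact hvone
  -- product of integral values
  have hprodv : ∀ S : Finset (Fin n), ∀ i ∈ S, ∀ j ∈ S,
      (∏ k, ∫ z, φ S i j k z ∂P) = if i = j then
        (p * σ2) * p ^ (S.card - 1) * (1 - p) ^ (n - S.card) else 0 := by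
    intro S i hi j hj
    by_cases hij : i = j
    · subst hij
      rw [if_pos rfl]
      have h1 : ∀ k, (∫ z, φ S i i k z ∂P) =
          if k ∈ S then (if k = i then p * σ2 else p) else (1 - p) := by
        intro k
        rw [hvform]
        by_cases h2 : k ∈ S <;> by_cases h3 : k = i <;> simp [h2, h3]
      calc (∏ k, ∫ z, φ S i i k z ∂P)
          = ∏ k ∈ Finset.univ, (if k ∈ S then (if k = i then p * σ2 else p) else (1 - p)) :=
            Finset.prod_congr rfl fun k _ => h1 k
        _ = (∏ k ∈ Finset.univ.filter (· ∈ S),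
              (if k ∈ S then (if k = i then p * σ2 else p) else (1 - p))) *
            ∏ k ∈ Finset.univ.filter (¬ · ∈ S),
              (if k ∈ S then (if k = i then p * σ2 else p) else (1 - p)) :=
            (Finset.prod_filter_mul_prod_filter_not _ _ _).symm
        _ = (∏ k ∈ S, (if k = i then p * σ2 else p)) * ∏ _k ∈ Sᶜ, (1 - p) := by
            congr 1
            · refine Finset.prod_congr (by ext k; simp) fun k hk => ?_
              rw [if_pos (by simpa using hk)]
            · refine Finset.prod_congr (by ext k; simp [Finset.mem_compl]) fun k hk => ?_
              rw [if_neg (by simpa [Finset.mem_compl] using hk)]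
        _ = (p * σ2) * p ^ (S.card - 1) * (1 - p) ^ (n - S.card) := by
            rw [← Finset.mul_prod_erase S _ hi, if_pos rfl]
            rw [Finset.prod_congr rfl (fun k hk => if_neg (Finset.ne_of_mem_erase hk)),
              Finset.prod_const, Finset.prod_const, Finset.card_erase_of_mem hi,
              Finset.card_compl, Fintype.card_fin, mul_assoc]
    · rw [if_neg hij]
      refine Finset.prod_eq_zero (Finset.mem_univ i) ?_
      rw [hvform, if_pos hi, if_pos rfl, if_neg fun h => hij h]
  -- integrability of the big sum
  have hFint : Integrable (fun ω => ∑ S ∈ (Finset.univ : Finset (Fin n)).powerset,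
      p * ((S.card : ℝ)⁻¹) ^ 2 * ∑ i ∈ S, ∑ j ∈ S, ∏ k, φ S i j k (Z k ω)) ℙ := by
    refine integrable_finset_sum _ fun S _ => Integrable.const_mul ?_ _
    exact integrable_finset_sum _ fun i _ => integrable_finset_sum _ fun j _ => (hprod S i j).1
  constructor
  · exact hFint.congr (Filter.Eventually.of_forall fun ω => (hpoint ω).symm)
  rw [integral_congr_ae (Filter.Eventually.of_forall hpoint),
    integral_finset_sum _ fun S _ => Integrable.const_mul
      (integrable_finset_sum _ fun i _ => integrable_finset_sum _ fun j _ => (hprod S i j).1) _]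
  have hSval : ∀ S ∈ (Finset.univ : Finset (Fin n)).powerset,
      (∫ ω, p * ((S.card : ℝ)⁻¹) ^ 2 * ∑ i ∈ S, ∑ j ∈ S, ∏ k, φ S i j k (Z k ω)) =
      p * ((S.card : ℝ)⁻¹) ^ 2 *
        (S.card * ((p * σ2) * p ^ (S.card - 1) * (1 - p) ^ (n - S.card))) := by
    intro S _
    rw [integral_const_mul]
    congr 1
    rw [integral_finset_sum _ fun i _ =>
      integrable_finset_sum _ fun j _ => (hprod S i j).1]
    have : ∀ i ∈ S, (∫ ω, ∑ j ∈ S, ∏ k, φ S i j k (Z k ω))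
        = (p * σ2) * p ^ (S.card - 1) * (1 - p) ^ (n - S.card) := by
      intro i hi
      rw [integral_finset_sum _ fun j _ => (hprod S i j).1]
      have h2 : ∀ j ∈ S, (∫ ω, ∏ k, φ S i j k (Z k ω)) = if i = j then
          (p * σ2) * p ^ (S.card - 1) * (1 - p) ^ (n - S.card) else 0 := by
        intro j hj
        rw [(hprod S i j).2, hprodv S i hi j hj]
      rw [Finset.sum_congr rfl h2, Finset.sum_ite_eq S i, if_pos hi]
    rw [Finset.sum_congr rfl this, Finset.sum_const, nsmul_eq_mul]
  rw [Finset.sum_congr rfl hSval]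
  -- combinatorics: group by cardinality
  have hcomb : (∑ S ∈ (Finset.univ : Finset (Fin n)).powerset,
      p * ((S.card : ℝ)⁻¹) ^ 2 *
        (S.card * ((p * σ2) * p ^ (S.card - 1) * (1 - p) ^ (n - S.card))))
      = ∑ c ∈ Finset.range (n + 1), (n.choose c : ℝ) *
        (p * ((c : ℝ)⁻¹) ^ 2 * (c * ((p * σ2) * p ^ (c - 1) * (1 - p) ^ (n - c)))) := by
    rw [Finset.powerset_card_disjiUnion]; erw [Finset.sum_disjiUnion]
    rw [show (Finset.univ : Finset (Fin n)).card = n by simp]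
    refine Finset.sum_congr rfl fun c _ => ?_
    have : ∀ S ∈ Finset.powersetCard c (Finset.univ : Finset (Fin n)),
        p * ((S.card : ℝ)⁻¹) ^ 2 *
          (S.card * ((p * σ2) * p ^ (S.card - 1) * (1 - p) ^ (n - S.card)))
        = p * ((c : ℝ)⁻¹) ^ 2 * (c * ((p * σ2) * p ^ (c - 1) * (1 - p) ^ (n - c))) := by
      intro S hS
      rw [(Finset.mem_powersetCard.mp hS).2]
    rw [Finset.sum_congr rfl this, Finset.sum_const, Finset.card_powersetCard,
      nsmul_eq_mul]
    simp
  rw [hcomb]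
  have hrange : Finset.range (n + 1) = insert 0 (Finset.Icc 1 n) := by
    ext x; simp [Finset.mem_range, Finset.mem_Icc]; omega
  rw [hrange, Finset.sum_insert (by simp), Finset.mul_sum]
  simp only [Nat.cast_zero, mul_zero, zero_mul, add_zero, zero_add]
  refine Finset.sum_congr rfl fun c hc => ?_
  have hc1 : 1 ≤ c := (Finset.mem_Icc.mp hc).1
  have hcne : (c : ℝ) ≠ 0 := Nat.cast_ne_zero.mpr (by omega)
  have hpow : p ^ (c + 1) = p ^ (c - 1) * p ^ 2 := by
    rw [← pow_add]; congr 1; omega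
  rw [hpow]
  have hinv : ((c : ℝ)⁻¹) ^ 2 * (c : ℝ) = (c : ℝ)⁻¹ := by
    rw [sq, mul_assoc, inv_mul_cancel₀ hcne, mul_one]
  calc (n.choose c : ℝ) *
      (p * ((c : ℝ)⁻¹) ^ 2 * (c * (p * σ2 * p ^ (c - 1) * (1 - p) ^ (n - c))))
      = ((c : ℝ)⁻¹) ^ 2 * (c : ℝ) *
        ((n.choose c : ℝ) * p * p * σ2 * p ^ (c - 1) * (1 - p) ^ (n - c)) := by ring
    _ = (c : ℝ)⁻¹ *
        ((n.choose c : ℝ) * p * p * σ2 * p ^ (c - 1) * (1 - p) ^ (n - c)) := by rw [hinv]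
    _ = σ2 * ((c : ℝ)⁻¹ * (n.choose c : ℝ) * (p ^ (c - 1) * p ^ 2) * (1 - p) ^ (n - c)) := by
        ring


/-- Histogram regression:
`E[Σ_λ p_λ 1_{p̂_λ>0}(β̂_λ−β_λ)²] = n⁻¹ Σ_λ e⁰(n,p_λ) σ_λ²`, where
`e⁰(n,p) = E[Z]·E[Z⁻¹ 1_{Z>0}]` for `Z ~ B(n,p)`, written through the explicit
binomial formula `e⁰(n,p) = np · Σ_{k=1}^n k⁻¹ C(n,k) p^k (1−p)^{n−k}`. -/
theorem stmt_5 {Ω : Type*} [MeasureSpace Ω] [IsProbabilityMeasure (ℙ : Measure Ω)]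
    {𝒳 : Type*} [MeasurableSpace 𝒳] (n : ℕ) (hn : 0 < n)
    (X : Fin n → Ω → 𝒳) (Y : Fin n → Ω → ℝ)
    (P : Measure (𝒳 × ℝ)) (hP : IsProbabilityMeasure P)
    (hmeas : ∀ i, Measurable fun ω => (X i ω, Y i ω))
    (hlaw : ∀ i, Measure.map (fun ω => (X i ω, Y i ω)) ℙ = P)
    (hindep : iIndepFun (fun i ω => (X i ω, Y i ω)) ℙ)
    (hY2 : Integrable (fun z : 𝒳 × ℝ => z.2 ^ 2) P)
    {Λ : Type*} [Fintype Λ]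
    (I : Λ → Set 𝒳) (hI : ∀ l, MeasurableSet (I l)) (hpart : ∀ x : 𝒳, ∃! l, x ∈ I l)
    (p : Λ → ℝ) (hp : ∀ l, p l = (P {z | z.1 ∈ I l}).toReal)
    (cnt : Λ → Ω → ℕ)
    (hcnt : ∀ l ω, cnt l ω = ∑ i, Set.indicator (I l) (fun _ => 1) (X i ω))
    (β : Λ → ℝ)
    (hβ : ∀ l, β l =
      (∫ z in {z : 𝒳 × ℝ | z.1 ∈ I l}, z.2 ∂P) / (P {z | z.1 ∈ I l}).toReal)
    (σ2 : Λ → ℝ)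
    (hσ2 : ∀ l, σ2 l =
      (∫ z in {z : 𝒳 × ℝ | z.1 ∈ I l}, (z.2 - β l) ^ 2 ∂P) / (P {z | z.1 ∈ I l}).toReal)
    (βhat : Λ → Ω → ℝ)
    (hβhat : ∀ l ω, βhat l ω =
      (∑ i, Set.indicator (I l) (fun _ => Y i ω) (X i ω)) / (cnt l ω : ℝ))
    (e0 : ℝ → ℝ)
    (he0 : ∀ q : ℝ, e0 q = (n : ℝ) * q *
      ∑ k ∈ Finset.Icc 1 n, (k : ℝ)⁻¹ * (n.choose k : ℝ) * q ^ k * (1 - q) ^ (n - k)) :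
    ∫ ω, (∑ l, if 0 < cnt l ω then p l * (βhat l ω - β l) ^ 2 else 0) =
      (n : ℝ)⁻¹ * ∑ l, e0 (p l) * σ2 l := by
  classical
  have hcell := fun l => cell_lemma n X Y P hP hmeas hlaw hindep hY2 (I l) (hI l)
    (p l) (β l) (σ2 l) (hp l) (hβ l) (hσ2 l)
  have heq : ∀ l, ∀ ω, (if 0 < cnt l ω then p l * (βhat l ω - β l) ^ 2 else 0) =
      (if 0 < (∑ i, Set.indicator (I l) (fun _ => 1) (X i ω) : ℕ) then
        p l * ((∑ i, Set.indicator (I l) (fun _ => Y i ω) (X i ω)) /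
          ((∑ i, Set.indicator (I l) (fun _ => 1) (X i ω) : ℕ) : ℝ) - β l) ^ 2 else 0) := by
    intro l ω
    rw [hβhat l ω, hcnt l ω]
  have hFint : ∀ l, Integrable
      (fun ω => if 0 < cnt l ω then p l * (βhat l ω - β l) ^ 2 else 0) ℙ :=
    fun l => (hcell l).1.congr (Filter.Eventually.of_forall fun ω => (heq l ω).symm)
  rw [integral_finset_sum _ fun l _ => hFint l, Finset.mul_sum]
  refine Finset.sum_congr rfl fun l _ => ?_
  have hIl : (∫ ω, (if 0 < cnt l ω then p l * (βhat l ω - β l) ^ 2 else 0)) =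
      σ2 l * ∑ k ∈ Finset.Icc 1 n, (k : ℝ)⁻¹ * (n.choose k : ℝ) *
        p l ^ (k + 1) * (1 - p l) ^ (n - k) := by
    rw [integral_congr_ae (Filter.Eventually.of_forall (heq l))]
    exact (hcell l).2
  rw [hIl]
  have h2 : (∑ k ∈ Finset.Icc 1 n, (k : ℝ)⁻¹ * (n.choose k : ℝ) *
      p l ^ (k + 1) * (1 - p l) ^ (n - k))
      = (∑ k ∈ Finset.Icc 1 n, (k : ℝ)⁻¹ * (n.choose k : ℝ) *
        p l ^ k * (1 - p l) ^ (n - k)) * p l := by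
    rw [Finset.sum_mul]
    exact Finset.sum_congr rfl fun k _ => by rw [pow_succ]; ring
  have hnne : (n : ℝ) ≠ 0 := Nat.cast_ne_zero.mpr hn.ne'
  rw [h2, he0]
  calc σ2 l * ((∑ k ∈ Finset.Icc 1 n, (k : ℝ)⁻¹ * (n.choose k : ℝ) *
          p l ^ k * (1 - p l) ^ (n - k)) * p l)
      = ((n : ℝ)⁻¹ * (n : ℝ)) * (σ2 l * ((∑ k ∈ Finset.Icc 1 n, (k : ℝ)⁻¹ * (n.choose k : ℝ) *
          p l ^ k * (1 - p l) ^ (n - k)) * p l)) := by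
        rw [inv_mul_cancel₀ hnne, one_mul]
    _ = (n : ℝ)⁻¹ * ((n : ℝ) * p l * (∑ k ∈ Finset.Icc 1 n, (k : ℝ)⁻¹ * (n.choose k : ℝ) *
          p l ^ k * (1 - p l) ^ (n - k)) * σ2 l) := by ring
end

section
/- Let (p_λ)_{λ∈Λ_m} be nonnegative real numbers summing to 1, (np̂_λ)_{λ∈Λ_m} a multinomial random vector with parameters (n; (p_λ)_{λ∈Λ_m}), and γ₀ > 0. Assume card(Λ_m) ≤ n and min_{λ∈Λ_m} np_λ ≥ B_n > 0. Then there exist absolute constants L and L′ such that, on an event of probability at least 1 − L·n^{−γ₀}, the following three inequalities hold simultaneously: max_{λ∈Λ_m} { (p_λ/p̂_λ)·1_{p̂_λ>0} } ≤ L′·(γ₀+1)·ln(n); min_{λ∈Λ_m} { p_λ/p̂_λ } ≥ 1/(2 + (γ₀+1)·B_n^{−1}·ln(n)); and min_{λ∈Λ_m} { np̂_λ } ≥ (min_{λ∈Λ_m} np_λ)/2 − 2(γ₀+1)·ln(n). -/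
open MeasureTheory ProbabilityTheory

section Aux
variable {Ω : Type} [MeasureSpace Ω] [IsProbabilityMeasure (ℙ : Measure Ω)]

lemma bern_exp_eq (A : Set Ω) (t : ℝ) :
    (fun ω => Real.exp (t * A.indicator (fun _ => (1:ℝ)) ω)) =
      fun ω => A.indicator (fun _ => Real.exp t - 1) ω + 1 := by
  funext ω
  by_cases h : ω ∈ A
  · simp [Set.indicator_of_mem h]
  · simp [Set.indicator_of_notMem h]

lemma bern_integrable (A : Set Ω) (hA : MeasurableSet A) (t : ℝ) :
    Integrable (fun ω => Real.exp (t * A.indicator (fun _ => (1:ℝ)) ω)) ℙ := by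
  rw [bern_exp_eq]
  exact ((integrable_const (Real.exp t - 1)).indicator hA).add (integrable_const 1)

lemma bern_mgf (A : Set Ω) (hA : MeasurableSet A) (t : ℝ) :
    mgf (A.indicator (fun _ => (1:ℝ))) ℙ t = 1 + (Real.exp t - 1) * (ℙ A).toReal := by
  have h0 : mgf (A.indicator (fun _ => (1:ℝ))) ℙ t
      = ∫ ω, Real.exp (t * A.indicator (fun _ => (1:ℝ)) ω) ∂ℙ := rfl
  rw [h0, bern_exp_eq,
    integral_add (((integrable_const (Real.exp t - 1)).indicator hA)) (integrable_const 1),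
    integral_indicator_const _ hA]
  simp [mul_comm]
  rw [measureReal_def]
  ring

end Aux

lemma sum_bern {Ω : Type} [MeasureSpace Ω] [IsProbabilityMeasure (ℙ : Measure Ω)]
    {Λ : Type} {n : ℕ} (ξ : Fin n → Ω → Λ)
    (hξmeas : ∀ i, @Measurable Ω Λ _ ⊤ (ξ i))
    (hξindep : @iIndepFun Ω (Fin n) _ (fun _ => Λ) (fun _ => (⊤ : MeasurableSpace Λ)) ξ ℙ)
    (l : Λ) (q : ℝ) (hq0 : 0 ≤ q) (hq1 : q ≤ 1)
    (hlaw : ∀ i, (ℙ {ω | ξ i ω = l}).toReal = q) (t : ℝ) :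
    Integrable (fun ω => Real.exp (t * ∑ i, ({ω' | ξ i ω' = l}).indicator (fun _ => (1:ℝ)) ω)) ℙ ∧
    mgf (fun ω => ∑ i, ({ω' | ξ i ω' = l}).indicator (fun _ => (1:ℝ)) ω) ℙ t
      ≤ Real.exp (n * (q * (Real.exp t - 1))) := by
  set Y : Fin n → Ω → ℝ := fun i => ({ω' | ξ i ω' = l}).indicator (fun _ => (1:ℝ)) with hY
  have hYeq : ∀ i, Y i = (({l} : Set Λ).indicator (fun _ => (1:ℝ))) ∘ ξ i := by
    intro i; funext ω
    by_cases h : ξ i ω = l <;>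
      simp [hY, h, Set.indicator_apply, Set.mem_setOf_eq]
  have hA : ∀ i, MeasurableSet {ω' | ξ i ω' = l} := by
    intro i
    exact hξmeas i (MeasurableSpace.measurableSet_top (s := ({l} : Set Λ)))
  have hYmeas : ∀ i, Measurable (Y i) := by
    intro i; rw [hYeq]; exact measurable_from_top.comp (hξmeas i)
  have hYindep : iIndepFun Y ℙ := by
    have h := hξindep.comp (fun _ => (({l} : Set Λ).indicator (fun _ => (1:ℝ))))
      (fun _ => measurable_from_top)
    rw [show Y = fun i => (({l} : Set Λ).indicator (fun _ => (1:ℝ))) ∘ ξ i from funext hYeq]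
    exact h
  have hsum : (∑ i, Y i) = fun ω => ∑ i, Y i ω := by funext ω; simp
  have hint : ∀ i ∈ Finset.univ, Integrable (fun ω => Real.exp (t * Y i ω)) ℙ :=
    fun i _ => bern_integrable _ (hA i) t
  constructor
  · have h := hYindep.integrable_exp_mul_sum hYmeas hint
    simpa [Finset.sum_apply] using h
  · have hm := hYindep.mgf_sum (t := t) hYmeas Finset.univ
    have hmgf_i : ∀ i, mgf (Y i) ℙ t = 1 + (Real.exp t - 1) * q := fun i => by
      rw [hY]; rw [bern_mgf _ (hA i) t, hlaw i]
    have h1 : mgf (fun ω => ∑ i, Y i ω) ℙ t = (1 + (Real.exp t - 1) * q) ^ n := by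
      rw [← hsum, hm]
      simp [hmgf_i]
    rw [h1]
    have hbase0 : 0 ≤ 1 + (Real.exp t - 1) * q := by nlinarith [Real.exp_nonneg t]
    have hbase : 1 + (Real.exp t - 1) * q ≤ Real.exp (q * (Real.exp t - 1)) := by
      nlinarith [Real.add_one_le_exp (q * (Real.exp t - 1))]
    calc (1 + (Real.exp t - 1) * q) ^ n ≤ (Real.exp (q * (Real.exp t - 1))) ^ n :=
          pow_le_pow_left₀ hbase0 hbase n
      _ = Real.exp (n * (q * (Real.exp t - 1))) := by rw [← Real.exp_nat_mul]

lemma chernoff_tails {Ω : Type} [MeasureSpace Ω] [IsProbabilityMeasure (ℙ : Measure Ω)]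
    {Λ : Type} {n : ℕ} (ξ : Fin n → Ω → Λ)
    (hξmeas : ∀ i, @Measurable Ω Λ _ ⊤ (ξ i))
    (hξindep : @iIndepFun Ω (Fin n) _ (fun _ => Λ) (fun _ => (⊤ : MeasurableSpace Λ)) ξ ℙ)
    (l : Λ) (q : ℝ) (hq0 : 0 ≤ q) (hq1 : q ≤ 1)
    (hlaw : ∀ i, (ℙ {ω | ξ i ω = l}).toReal = q) (c : ℝ) (hc : 0 ≤ c) :
    (ℙ {ω | 2 * ((n:ℝ) * q) + c ≤
        ∑ i, ({ω' | ξ i ω' = l}).indicator (fun _ => (1:ℝ)) ω}).toReal ≤ Real.exp (-c) ∧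
    (ℙ {ω | ∑ i, ({ω' | ξ i ω' = l}).indicator (fun _ => (1:ℝ)) ω ≤
        (n:ℝ) * q / 2 - 2 * c}).toReal ≤ Real.exp (-c) := by
  have key := sum_bern ξ hξmeas hξindep l q hq0 hq1 hlaw
  have hnq : (0:ℝ) ≤ (n:ℝ) * q := by positivity
  constructor
  · have hch := measure_ge_le_exp_mul_mgf (μ := ℙ) (2 * ((n:ℝ) * q) + c)
      (t := 1) zero_le_one (key 1).1
    refine le_trans hch ?_
    refine le_trans (mul_le_mul_of_nonneg_left (key 1).2 (Real.exp_nonneg _)) ?_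
    rw [← Real.exp_add]
    apply Real.exp_le_exp.mpr
    have he3 : Real.exp 1 ≤ 3 := by nlinarith [Real.exp_one_lt_d9]
    nlinarith [mul_nonneg hnq (by linarith : (0:ℝ) ≤ 3 - Real.exp 1)]
  · have hch := measure_le_le_exp_mul_mgf (μ := ℙ) ((n:ℝ) * q / 2 - 2 * c)
      (t := -1) (by norm_num) (key (-1)).1
    refine le_trans hch ?_
    refine le_trans (mul_le_mul_of_nonneg_left (key (-1)).2 (Real.exp_nonneg _)) ?_
    rw [← Real.exp_add]
    apply Real.exp_le_exp.mpr
    have h2e : (2:ℝ) ≤ Real.exp 1 := by nlinarith [Real.add_one_le_exp 1]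
    have hexpneg : Real.exp (-1) ≤ 1/2 := by
      rw [Real.exp_neg]
      calc (Real.exp 1)⁻¹ ≤ (2:ℝ)⁻¹ := by
            apply inv_anti₀ (by norm_num) h2e
        _ = 1/2 := by norm_num
    nlinarith [mul_nonneg hnq (by linarith : (0:ℝ) ≤ 1/2 - Real.exp (-1))]

/-- Control of empirical frequencies of a multinomial vector:
there are absolute constants `L, L'` such that if `(np̂_λ)_λ` is multinomial with
parameters `(n; (p_λ)_λ)`, `card Λ ≤ n` and `min_λ np_λ ≥ B_n > 0`, then on an
event of probability at least `1 − L n^{−γ₀}`: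
`max_λ (p_λ/p̂_λ)1_{p̂_λ>0} ≤ L'(γ₀+1)ln n`,
`min_λ p_λ/p̂_λ ≥ 1/(2+(γ₀+1)B_n⁻¹ ln n)` (ratio `= +∞` when `p̂_λ = 0`), and
`min_λ np̂_λ ≥ (min_λ np_λ)/2 − 2(γ₀+1)ln n`. -/
theorem stmt_16 :
    ∃ L : ℝ, 0 < L ∧ ∃ L' : ℝ, 0 < L' ∧
      ∀ (Ω : Type) (_ : MeasureSpace Ω) (_ : IsProbabilityMeasure (ℙ : Measure Ω))
        (Λ : Type) (_ : Fintype Λ) (_ : Nonempty Λ)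
        (n : ℕ) (_hn : 0 < n) (p : Λ → ℝ) (_hp0 : ∀ l, 0 ≤ p l) (_hp1 : ∑ l, p l = 1)
        (ξ : Fin n → Ω → Λ)
        (_hξmeas : ∀ i, @Measurable Ω Λ _ ⊤ (ξ i))
        (_hξindep : @iIndepFun Ω (Fin n) _ (fun _ => Λ) (fun _ => (⊤ : MeasurableSpace Λ)) ξ ℙ)
        (_hξlaw : ∀ i l, (ℙ {ω | ξ i ω = l}).toReal = p l)
        (N : Λ → Ω → ℕ)
        (_hN : ∀ l ω, N l ω = ∑ i, Set.indicator ({l} : Set Λ) (fun _ => 1) (ξ i ω))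
        (γ₀ : ℝ) (_hγ₀ : 0 < γ₀) (Bn : ℝ) (_hBn : 0 < Bn)
        (_hcard : Fintype.card Λ ≤ n) (_hB : ∀ l, Bn ≤ (n : ℝ) * p l),
        (ℙ {ω |
            (∀ l, 0 < N l ω → p l * (n : ℝ) / (N l ω : ℝ) ≤ L' * (γ₀ + 1) * Real.log n) ∧
            (∀ l, 0 < N l ω →
              1 / (2 + (γ₀ + 1) * Bn⁻¹ * Real.log n) ≤ p l * (n : ℝ) / (N l ω : ℝ)) ∧
            (∀ l, (⨅ l' : Λ, (n : ℝ) * p l') / 2 - 2 * (γ₀ + 1) * Real.log n ≤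
              (N l ω : ℝ))}).toReal ≥
          1 - L * (n : ℝ) ^ (-γ₀) := by
  refine ⟨2, by norm_num, 8, by norm_num, ?_⟩
  intro Ω mΩ hprob Λ fΛ neΛ n hn p hp0 hp1 ξ hξmeas hξindep hξlaw N hN γ₀ hγ₀ Bn hBn hcard hB
  rcases Nat.lt_or_ge n 2 with hn2 | hn2
  · -- n = 1 : the RHS is nonpositive
    have hn1 : n = 1 := by omega
    subst hn1
    rw [ge_iff_le]
    refine le_trans ?_ ENNReal.toReal_nonneg
    have h1 : ((1:ℕ):ℝ) ^ (-γ₀) = 1 := by rw [Nat.cast_one, Real.one_rpow]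
    rw [h1]; norm_num
  · -- n ≥ 2
    have hnR : (2:ℝ) ≤ (n:ℝ) := by exact_mod_cast hn2
    have hnpos : (0:ℝ) < (n:ℝ) := by linarith
    have hlog2 : (0.6931:ℝ) < Real.log 2 := by
      have := Real.log_two_gt_d9; norm_num at this ⊢; linarith
    have hlogn : Real.log 2 ≤ Real.log (n:ℝ) := Real.log_le_log (by norm_num) hnR
    have hlogn0 : 0 < Real.log (n:ℝ) := by linarith
    set c : ℝ := (γ₀ + 1) * Real.log (n:ℝ) with hc
    have hγ1 : (1:ℝ) ≤ γ₀ + 1 := by linarith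
    have hcge : Real.log 2 ≤ c := by nlinarith
    have hcpos : 0 < c := by linarith
    have hple1 : ∀ l, p l ≤ 1 := by
      intro l; rw [← hp1]
      exact Finset.single_le_sum (fun i _ => hp0 i) (Finset.mem_univ l)
    have hNS : ∀ l ω, (N l ω : ℝ) = ∑ i, ({ω' | ξ i ω' = l}).indicator (fun _ => (1:ℝ)) ω := by
      intro l ω
      rw [hN l ω]
      push_cast
      refine Finset.sum_congr rfl fun i _ => ?_
      by_cases h : ξ i ω = l
      · simp [Set.indicator_apply, h]
      · simp [Set.indicator_apply, h]
    -- tail bounds for each l, phrased in terms of N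
    have hup : ∀ l, (ℙ {ω | 2 * ((n:ℝ) * p l) + c ≤ (N l ω : ℝ)}).toReal ≤ Real.exp (-c) := by
      intro l
      have h := (chernoff_tails ξ hξmeas hξindep l (p l) (hp0 l) (hple1 l)
        (fun i => hξlaw i l) c hcpos.le).1
      have hsets : {ω | 2 * ((n:ℝ) * p l) + c ≤ (N l ω : ℝ)}
          = {ω | 2 * ((n:ℝ) * p l) + c ≤
              ∑ i, ({ω' | ξ i ω' = l}).indicator (fun _ => (1:ℝ)) ω} :=
        Set.ext fun ω => by rw [Set.mem_setOf_eq, Set.mem_setOf_eq, hNS l ω]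
      rw [hsets]; exact h
    have hlo : ∀ l, (ℙ {ω | (N l ω : ℝ) ≤ (n:ℝ) * p l / 2 - 2 * c}).toReal ≤ Real.exp (-c) := by
      intro l
      have h := (chernoff_tails ξ hξmeas hξindep l (p l) (hp0 l) (hple1 l)
        (fun i => hξlaw i l) c hcpos.le).2
      have hsets : {ω | (N l ω : ℝ) ≤ (n:ℝ) * p l / 2 - 2 * c}
          = {ω | (∑ i, ({ω' | ξ i ω' = l}).indicator (fun _ => (1:ℝ)) ω) ≤
              (n:ℝ) * p l / 2 - 2 * c} :=
        Set.ext fun ω => by rw [Set.mem_setOf_eq, Set.mem_setOf_eq, hNS l ω]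
      rw [hsets]; exact h
    set A : Λ → Set Ω := fun l => {ω | 2 * ((n:ℝ) * p l) + c ≤ (N l ω : ℝ)} with hA
    set B : Λ → Set Ω := fun l => {ω | (N l ω : ℝ) ≤ (n:ℝ) * p l / 2 - 2 * c} with hBdef
    set bad : Set Ω := ⋃ l, (A l ∪ B l) with hbad
    have hbadle : ℙ bad ≤ ∑ l, (ℙ (A l) + ℙ (B l)) := by
      calc ℙ bad ≤ ∑' l, ℙ (A l ∪ B l) := measure_iUnion_le _
        _ = ∑ l, ℙ (A l ∪ B l) := tsum_fintype _
        _ ≤ ∑ l, (ℙ (A l) + ℙ (B l)) := Finset.sum_le_sum fun l _ => measure_union_le _ _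
    have hbadR : (ℙ bad).toReal ≤ (n:ℝ) * (2 * Real.exp (-c)) := by
      have hfin : (∑ l, (ℙ (A l) + ℙ (B l))) ≠ ⊤ := by
        refine (ENNReal.sum_lt_top.mpr fun l _ => ?_).ne
        exact ENNReal.add_lt_top.mpr ⟨measure_lt_top _ _, measure_lt_top _ _⟩
      have h1 := ENNReal.toReal_mono hfin hbadle
      rw [ENNReal.toReal_sum (fun l _ =>
        (ENNReal.add_lt_top.mpr ⟨measure_lt_top _ _, measure_lt_top _ _⟩).ne)] at h1
      have h2 : ∑ l, (ℙ (A l) + ℙ (B l)).toReal ≤ ∑ (_l : Λ), (2 * Real.exp (-c)) := by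
        refine Finset.sum_le_sum fun l _ => ?_
        rw [ENNReal.toReal_add (measure_ne_top _ _) (measure_ne_top _ _)]
        have := hup l; have := hlo l
        linarith
      have h3 : ∑ (_l : Λ), (2 * Real.exp (-c)) = (Fintype.card Λ : ℝ) * (2 * Real.exp (-c)) := by
        rw [Finset.sum_const, Finset.card_univ, nsmul_eq_mul]
      have h4 : ((Fintype.card Λ : ℝ)) ≤ (n:ℝ) := by exact_mod_cast hcard
      have h5 : (0:ℝ) ≤ 2 * Real.exp (-c) := by positivity
      nlinarith
    -- complement inclusion
    have hsub : badᶜ ⊆ {ω |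
        (∀ l, 0 < N l ω → p l * (n : ℝ) / (N l ω : ℝ) ≤ 8 * (γ₀ + 1) * Real.log n) ∧
        (∀ l, 0 < N l ω →
          1 / (2 + (γ₀ + 1) * Bn⁻¹ * Real.log n) ≤ p l * (n : ℝ) / (N l ω : ℝ)) ∧
        (∀ l, (⨅ l' : Λ, (n : ℝ) * p l') / 2 - 2 * (γ₀ + 1) * Real.log n ≤ (N l ω : ℝ))} := by
      intro ω hω
      simp only [hbad, hA, hBdef, Set.mem_compl_iff, Set.mem_iUnion, Set.mem_union,
        Set.mem_setOf_eq, not_exists, not_or, not_le] at hω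
      have h8c : (8:ℝ) * (γ₀ + 1) * Real.log n = 8 * c := by rw [hc]; ring
      have h2c : (2:ℝ) * (γ₀ + 1) * Real.log n = 2 * c := by rw [hc]; ring
      refine ⟨?_, ?_, ?_⟩
      · intro l hNl
        have hN1 : (1:ℝ) ≤ (N l ω : ℝ) := by exact_mod_cast hNl
        have hNpos : (0:ℝ) < (N l ω : ℝ) := by linarith
        obtain ⟨hhigh, hlow⟩ := hω l
        rw [h8c]
        by_cases hcase : (n:ℝ) * p l ≤ 8 * c
        · have h1 : p l * (n:ℝ) / (N l ω : ℝ) ≤ p l * (n:ℝ) :=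
            div_le_self (mul_nonneg (hp0 l) hnpos.le) hN1
          have hcomm : p l * (n:ℝ) = (n:ℝ) * p l := mul_comm _ _
          linarith
        · push_neg at hcase
          have hnppos : (0:ℝ) < (n:ℝ) * p l := lt_of_lt_of_le hBn (hB l)
          have h4lt : (n:ℝ) * p l / 4 < (N l ω : ℝ) := by linarith
          have hd4 : p l * (n:ℝ) / (N l ω : ℝ) ≤ 4 := by
            rw [div_le_iff₀ hNpos]
            nlinarith
          nlinarith
      · intro l hNl
        have hNpos : (0:ℝ) < (N l ω : ℝ) := by exact_mod_cast hNl
        obtain ⟨hhigh, hlow⟩ := hω l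
        have hD2 : (0:ℝ) ≤ (γ₀ + 1) * Bn⁻¹ * Real.log n :=
          mul_nonneg (mul_nonneg (by linarith) (inv_nonneg.mpr hBn.le)) hlogn0.le
        have hDpos : (0:ℝ) < 2 + (γ₀ + 1) * Bn⁻¹ * Real.log n := by linarith
        have hBninv : (1:ℝ) ≤ (n:ℝ) * p l * Bn⁻¹ := by
          have h := mul_le_mul_of_nonneg_right (hB l) (inv_nonneg.mpr hBn.le)
          rwa [mul_inv_cancel₀ hBn.ne'] at h
        have hkey : (N l ω : ℝ) ≤ p l * (n:ℝ) * (2 + (γ₀ + 1) * Bn⁻¹ * Real.log n) := by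
          have hc_le : c ≤ ((n:ℝ) * p l * Bn⁻¹) * c :=
            le_mul_of_one_le_left hcpos.le hBninv
          have hrw : p l * (n:ℝ) * (2 + (γ₀ + 1) * Bn⁻¹ * Real.log n)
              = 2 * ((n:ℝ) * p l) + ((n:ℝ) * p l * Bn⁻¹) * c := by rw [hc]; ring
          linarith
        rw [div_le_div_iff₀ hDpos hNpos]
        linarith
      · intro l
        obtain ⟨hhigh, hlow⟩ := hω l
        have hinf : (⨅ l' : Λ, (n:ℝ) * p l') ≤ (n:ℝ) * p l :=
          ciInf_le (Finite.bddBelow_range _) l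
        linarith
    have hunion : (1:ENNReal) ≤ ℙ bad + ℙ {ω |
        (∀ l, 0 < N l ω → p l * (n : ℝ) / (N l ω : ℝ) ≤ 8 * (γ₀ + 1) * Real.log n) ∧
        (∀ l, 0 < N l ω →
          1 / (2 + (γ₀ + 1) * Bn⁻¹ * Real.log n) ≤ p l * (n : ℝ) / (N l ω : ℝ)) ∧
        (∀ l, (⨅ l' : Λ, (n : ℝ) * p l') / 2 - 2 * (γ₀ + 1) * Real.log n ≤ (N l ω : ℝ))} := by
      calc (1:ENNReal) = ℙ Set.univ := measure_univ.symm
        _ ≤ ℙ (bad ∪ _) := measure_mono (fun ω _ => by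
            by_cases hω : ω ∈ bad
            · exact Or.inl hω
            · exact Or.inr (hsub hω))
        _ ≤ ℙ bad + ℙ _ := measure_union_le _ _
    have hreal : 1 ≤ (ℙ bad).toReal + (ℙ {ω |
        (∀ l, 0 < N l ω → p l * (n : ℝ) / (N l ω : ℝ) ≤ 8 * (γ₀ + 1) * Real.log n) ∧
        (∀ l, 0 < N l ω →
          1 / (2 + (γ₀ + 1) * Bn⁻¹ * Real.log n) ≤ p l * (n : ℝ) / (N l ω : ℝ)) ∧
        (∀ l, (⨅ l' : Λ, (n : ℝ) * p l') / 2 - 2 * (γ₀ + 1) * Real.log n ≤ (N l ω : ℝ))}).toReal := by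
      have h := ENNReal.toReal_mono
        ((ENNReal.add_lt_top.mpr ⟨measure_lt_top _ _, measure_lt_top _ _⟩).ne) hunion
      rwa [ENNReal.toReal_one, ENNReal.toReal_add (measure_ne_top _ _) (measure_ne_top _ _)] at h
    have hnexp : (n:ℝ) * Real.exp (-c) = (n:ℝ) ^ (-γ₀) := by
      rw [Real.rpow_def_of_pos hnpos]
      nth_rewrite 1 [show (n:ℝ) = Real.exp (Real.log (n:ℝ)) from (Real.exp_log hnpos).symm]
      rw [← Real.exp_add]
      congr 1
      rw [hc]; ring
    rw [ge_iff_le]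
    have hfin2 : (ℙ bad).toReal ≤ 2 * (n:ℝ) ^ (-γ₀) := by
      calc (ℙ bad).toReal ≤ (n:ℝ) * (2 * Real.exp (-c)) := hbadR
        _ = 2 * ((n:ℝ) * Real.exp (-c)) := by ring
        _ = 2 * (n:ℝ) ^ (-γ₀) := by rw [hnexp]
    linarith
end
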